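/- arXiv:1310.7656 — 7 statements merged into one kernel-verified Lean document; each statement's English description precedes it below -/
import Mathlib

section
/- Let Λ be a finitely aligned k-graph, let c be a T-valued 2-cocycle on Λ, and let t be a Toeplitz–Cuntz–Krieger (Λ,c)-family in a C*-algebra A. For ν, η ∈ Λ, write each λ ∈ MCE(ν,η) as λ = να_λ = ηβ_λ (these factorisations exist and are unique by the factorisation property). Then t_ν* t_η = Σ_{λ ∈ MCE(ν,η)} conj(c(ν,α_λ)) c(η,β_λ) t_{α_λ} t_{β_λ}*. -/
open scoped BigOperators

/-- A `k`-graph: a countable category with degree functor `d : Λ → ℕ^k`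
satisfying the factorisation property.  Composition `comp μ ν` is only
meaningful when `s μ = r ν`. -/
structure KGraph (k : ℕ) where
  Path : Type
  countable : Countable Path
  r : Path → Path
  s : Path → Path
  d : Path → (Fin k → ℕ)
  comp : Path → Path → Path
  d_r : ∀ l, d (r l) = 0
  d_s : ∀ l, d (s l) = 0
  r_of_vertex : ∀ v, d v = 0 → r v = v
  s_of_vertex : ∀ v, d v = 0 → s v = v
  id_comp : ∀ l, comp (r l) l = l
  comp_id : ∀ l, comp l (s l) = l
  r_comp : ∀ μ ν, s μ = r ν → r (comp μ ν) = r μ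
  s_comp : ∀ μ ν, s μ = r ν → s (comp μ ν) = s ν
  d_comp : ∀ μ ν, s μ = r ν → d (comp μ ν) = d μ + d ν
  comp_assoc : ∀ l μ ν, s l = r μ → s μ = r ν →
    comp (comp l μ) ν = comp l (comp μ ν)
  factor : ∀ (l : Path) (m n : Fin k → ℕ), d l = m + n →
    ∃! p : Path × Path, d p.1 = m ∧ d p.2 = n ∧ s p.1 = r p.2 ∧ comp p.1 p.2 = l

namespace KGraph

variable {k : ℕ} (G : KGraph k)

def IsVertex (v : G.Path) : Prop := G.d v = 0

/-- `MCE μ ν = μΛ ∩ νΛ ∩ Λ^{d μ ⊔ d ν}`. -/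
def MCE (μ ν : G.Path) : Set G.Path :=
  {l | G.d l = G.d μ ⊔ G.d ν ∧
      (∃ α, G.s μ = G.r α ∧ G.comp μ α = l) ∧
      (∃ β, G.s ν = G.r β ∧ G.comp ν β = l)}

def FinitelyAligned : Prop := ∀ μ ν : G.Path, (G.MCE μ ν).Finite

/-- `Ext(μ; E) = ⋃_{ν ∈ E} {α : μα ∈ MCE(μ,ν)}`. -/
def Ext (μ : G.Path) (E : Set G.Path) : Set G.Path :=
  {α | G.s μ = G.r α ∧ ∃ ν ∈ E, G.comp μ α ∈ G.MCE μ ν}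

/-- `Ext` computed relative to a sub-`k`-graph with path set `W`. -/
def ExtIn (W : Set G.Path) (μ : G.Path) (E : Set G.Path) : Set G.Path :=
  {α | G.s μ = G.r α ∧ ∃ ν ∈ E, G.comp μ α ∈ G.MCE μ ν ∩ W}

/-- `E` is exhaustive at `v` relative to the sub-`k`-graph with path set `W`. -/
def ExhaustiveIn (W : Set G.Path) (v : G.Path) (E : Set G.Path) : Prop :=
  ∀ l ∈ W, G.r l = v → ∃ μ ∈ E, (G.MCE l μ ∩ W).Nonempty

def Exhaustive (v : G.Path) (E : Set G.Path) : Prop := G.ExhaustiveIn Set.univ v E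

/-- Membership in `FE` of the sub-`k`-graph with path set `W`. -/
def IsFEIn (W : Set G.Path) (E : Set G.Path) : Prop :=
  E.Finite ∧ E ⊆ W ∧ (∀ μ ∈ E, ¬ G.IsVertex μ) ∧
    ∃ v, G.IsVertex v ∧ (∀ μ ∈ E, G.r μ = v) ∧ G.ExhaustiveIn W v E

def IsFE (E : Set G.Path) : Prop := G.IsFEIn Set.univ E

/-- A satiated collection of finite exhaustive sets, relative to the sub-`k`-graph `W`. -/
def SatiatedIn (W : Set G.Path) (Ε : Set (Set G.Path)) : Prop :=
  (∀ E ∈ Ε, G.IsFEIn W E) ∧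
  ∀ F ∈ Ε, ∀ v, G.IsVertex v → (∀ μ ∈ F, G.r μ = v) →
    ((∀ l ∈ W, G.r l = v → l ≠ v → insert l F ∈ Ε) ∧
     (∀ l ∈ W, G.r l = v →
        (¬ ∃ μ ∈ F, ∃ μ', G.s μ = G.r μ' ∧ G.comp μ μ' = l) →
        G.ExtIn W l F ∈ Ε) ∧
     (∀ lam lam', lam ∈ F → G.s lam = G.r lam' → G.comp lam lam' ∈ F →
        lam' ≠ G.s lam → F \ {G.comp lam lam'} ∈ Ε) ∧
     (∀ lam ∈ F, ∀ Gs ∈ Ε, (∀ μ ∈ Gs, G.r μ = G.s lam) →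
        ((F \ {lam}) ∪ (G.comp lam) '' Gs) ∈ Ε))

def Satiated (Ε : Set (Set G.Path)) : Prop := G.SatiatedIn Set.univ Ε

end KGraph

/-- A normalised `𝕋`-valued categorical `2`-cocycle on a `k`-graph, with the
circle realised as the norm-one complex numbers. -/
structure KGraph.Cocycle {k : ℕ} (G : KGraph k) where
  c : G.Path → G.Path → ℂ
  norm_one : ∀ μ ν, G.s μ = G.r ν → ‖c μ ν‖ = 1
  cocycle : ∀ l μ ν, G.s l = G.r μ → G.s μ = G.r ν →
    c l μ * c (G.comp l μ) ν = c μ ν * c l (G.comp μ ν)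
  left_id : ∀ l, c (G.r l) l = 1
  right_id : ∀ l, c l (G.s l) = 1

namespace KGraph

variable {k : ℕ} (G : KGraph k)

section CStar

variable {A : Type*} [NonUnitalNormedRing A] [StarRing A] [CStarRing A]
  [NormedSpace ℂ A] [IsScalarTower ℂ A A] [SMulCommClass ℂ A A]
  [StarModule ℂ A] [CompleteSpace A]

/-- Toeplitz–Cuntz–Krieger `(Λ, c)`-family. -/
def IsTCK (σ : G.Cocycle) (t : G.Path → A) : Prop :=
  (∀ v, G.IsVertex v → star (t v) = t v ∧ t v * t v = t v) ∧
  (∀ v w, G.IsVertex v → G.IsVertex w → v ≠ w → t v * t w = 0) ∧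
  (∀ μ ν, G.s μ = G.r ν → t μ * t ν = σ.c μ ν • t (G.comp μ ν)) ∧
  (∀ l, star (t l) * t l = t (G.s l)) ∧
  (∀ μ ν (F : Finset G.Path), (F : Set G.Path) = G.MCE μ ν →
    (t μ * star (t μ)) * (t ν * star (t ν)) = ∑ l ∈ F, t l * star (t l))

open scoped Classical in
/-- `Δ(t)^F = ∏_{l ∈ F} (q_v - q_l)`; the factors commute for a TCK family, so the
`noncommProd` below is the product from the paper.  The product is computed in the
unitization (with a harmless prefactor `q_v`, which acts as the identity on each
factor for a TCK family with `F ⊆ vΛ`), so that the empty product is `q_v`. -/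
noncomputable def Delta (t : G.Path → A) (v : G.Path) (F : Finset G.Path) : A :=
  if h : (F : Set G.Path).Pairwise (Function.onFun Commute fun l =>
      ((t v * star (t v) - t l * star (t l) : A) : Unitization ℂ A))
  then (((t v * star (t v) : A) : Unitization ℂ A) *
      F.noncommProd (fun l => ((t v * star (t v) - t l * star (t l) : A) : Unitization ℂ A)) h).snd
  else 0

/-- Relative Cuntz–Krieger `(Λ, c; Ε)`-family. -/
def IsRelCK (σ : G.Cocycle) (Ε : Set (Set G.Path)) (t : G.Path → A) : Prop :=
  G.IsTCK σ t ∧ ∀ (F : Finset G.Path) (v : G.Path), (F : Set G.Path) ∈ Ε →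
    G.IsVertex v → (∀ μ ∈ F, G.r μ = v) → G.Delta t v F = 0

/-- Cuntz–Krieger `(Λ, c)`-family (finitely aligned case). -/
def IsCK (σ : G.Cocycle) (t : G.Path → A) : Prop :=
  G.IsRelCK σ {E | G.IsFE E} t

/-- The `C*`-subalgebra of `A` generated by a family `t`, as a subset of `A`. -/
def cstarOf (t : G.Path → A) : Set A :=
  closure (↑(NonUnitalStarAlgebra.adjoin ℂ (Set.range t)) : Set A)

end CStar

/-- Row-finite with no sources: every `vΛ^n` is finite and nonempty. -/
def RowFiniteNoSources : Prop :=
  ∀ v, G.IsVertex v → ∀ n : Fin k → ℕ,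
    {l | G.r l = v ∧ G.d l = n}.Finite ∧ {l | G.r l = v ∧ G.d l = n}.Nonempty

section CStar2

variable {A : Type*} [NonUnitalNormedRing A] [StarRing A] [CStarRing A]
  [NormedSpace ℂ A] [IsScalarTower ℂ A A] [SMulCommClass ℂ A A]
  [StarModule ℂ A] [CompleteSpace A]

/-- Cuntz–Krieger family, row-finite no sources formulation:
`∑_{λ ∈ vΛ^n} t_λ t_λ* = t_v`. -/
def IsCKrf (σ : G.Cocycle) (t : G.Path → A) : Prop :=
  G.IsTCK σ t ∧ ∀ v (n : Fin k → ℕ) (F : Finset G.Path), G.IsVertex v →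
    (F : Set G.Path) = {l | G.r l = v ∧ G.d l = n} →
    ∑ l ∈ F, t l * star (t l) = t v

end CStar2

/-- A filter in a `k`-graph. -/
def IsFilter (S : Set G.Path) : Prop :=
  (∀ l, (∃ α, G.s l = G.r α ∧ G.comp l α ∈ S) → l ∈ S) ∧
  (∀ μ ∈ S, ∀ ν ∈ S, (G.MCE μ ν ∩ S).Nonempty)

/-- An ultrafilter: a filter meeting every `Λ^n`. -/
def IsUltrafilter (S : Set G.Path) : Prop :=
  G.IsFilter S ∧ ∀ n : Fin k → ℕ, ∃ l ∈ S, G.d l = n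

/-- `ℓ_μ(S) = {ν : νΛ ∩ μS ≠ ∅}`. -/
def lmap (μ : G.Path) (S : Set G.Path) : Set G.Path :=
  {ν | ∃ τ ∈ S, G.s μ = G.r τ ∧ ∃ α, G.s ν = G.r α ∧ G.comp ν α = G.comp μ τ}

/-- `μ ∼ ν`: `ℓ_μ(S) = ℓ_ν(S)` for every ultrafilter `S` with `r(S) = s(μ)`. -/
def PEquiv (μ ν : G.Path) : Prop :=
  ∀ S, G.IsUltrafilter S → G.s μ ∈ S → G.lmap μ S = G.lmap ν S

/-- `d` with values in `ℤ^k`. -/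
def dZ (l : G.Path) : Fin k → ℤ := fun i => (G.d l i : ℤ)

/-- `Per(Λ) ≤ ℤ^k`, generated by `{d(μ) - d(ν) : μ ∼ ν}`. -/
def PerGroup : AddSubgroup (Fin k → ℤ) :=
  AddSubgroup.closure
    {m | ∃ μ ν, G.s μ = G.s ν ∧ G.PEquiv μ ν ∧ m = G.dZ μ - G.dZ ν}

/-- The hereditary set `H_Per`. -/
def HPer : Set G.Path :=
  {v | G.IsVertex v ∧ ∀ m n : Fin k → ℕ,
    ((fun i => (m i : ℤ)) - fun i => (n i : ℤ)) ∈ G.PerGroup →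
    ∀ l, G.r l = v → G.d l = m →
      ∃ μ, G.r μ = v ∧ G.d μ = n ∧ G.s μ = G.s l ∧ G.PEquiv l μ}

end KGraph



private lemma conj_mul_self_of_norm_one {x : ℂ} (h : ‖x‖ = 1) :
    starRingEnd ℂ x * x = 1 := by
  rw [mul_comm, Complex.mul_conj]
  norm_cast
  rw [Complex.normSq_eq_norm_sq, h, one_pow]

section Aux

variable {k : ℕ} (G : KGraph k) (σ : G.Cocycle)
  {A : Type*} [NonUnitalNormedRing A] [StarRing A] [CStarRing A]
  [NormedSpace ℂ A] [IsScalarTower ℂ A A] [SMulCommClass ℂ A A]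
  [StarModule ℂ A] [CompleteSpace A]

private lemma tck_vertex_mul {t : G.Path → A} (ht : G.IsTCK σ t) (μ : G.Path) :
    t (G.r μ) * t μ = t μ := by
  have hs : G.s (G.r μ) = G.r μ := G.s_of_vertex _ (G.d_r μ)
  rw [ht.2.2.1 (G.r μ) μ hs, σ.left_id, G.id_comp, one_smul]

private lemma tck_star_mul {t : G.Path → A} (ht : G.IsTCK σ t)
    {μ l a : G.Path} (h1 : G.s μ = G.r a) (h2 : G.comp μ a = l) :
    star (t μ) * t l = (starRingEnd ℂ (σ.c μ a)) • t a := by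
  have hc : t μ * t a = σ.c μ a • t l := by
    rw [ht.2.2.1 μ a h1, h2]
  have key : star (t μ) * (t μ * t a) = t a := by
    rw [← mul_assoc, ht.2.2.2.1 μ, h1, tck_vertex_mul G σ ht]
  rw [hc, mul_smul_comm] at key
  have hone : starRingEnd ℂ (σ.c μ a) * σ.c μ a = 1 :=
    conj_mul_self_of_norm_one (σ.norm_one μ a h1)
  calc star (t μ) * t l
      = (starRingEnd ℂ (σ.c μ a) * σ.c μ a) • (star (t μ) * t l) := by
        rw [hone, one_smul]
    _ = (starRingEnd ℂ (σ.c μ a)) • (σ.c μ a • (star (t μ) * t l)) := by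
        rw [mul_smul]
    _ = (starRingEnd ℂ (σ.c μ a)) • t a := by rw [key]

end Aux

/-- `t_ν* t_η = Σ_{να=ηβ ∈ MCE(ν,η)} conj(c(ν,α)) c(η,β) t_α t_β*`. -/
theorem stmt1 {k : ℕ} (G : KGraph k) (hFA : G.FinitelyAligned) (σ : G.Cocycle)
    {A : Type*} [NonUnitalNormedRing A] [StarRing A] [CStarRing A]
    [NormedSpace ℂ A] [IsScalarTower ℂ A A] [SMulCommClass ℂ A A]
    [StarModule ℂ A] [CompleteSpace A]
    (t : G.Path → A) (ht : G.IsTCK σ t)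
    (ν η : G.Path) (F : Finset G.Path) (hF : (F : Set G.Path) = G.MCE ν η)
    (α β : G.Path → G.Path)
    (hα : ∀ l ∈ F, G.s ν = G.r (α l) ∧ G.comp ν (α l) = l)
    (hβ : ∀ l ∈ F, G.s η = G.r (β l) ∧ G.comp η (β l) = l) :
    star (t ν) * t η =
      ∑ l ∈ F, (starRingEnd ℂ (σ.c ν (α l)) * σ.c η (β l)) •
        (t (α l) * star (t (β l))) := by

  -- t_ν* = t_ν* t_ν t_ν*  and  t_η = t_η t_η* t_η
  have hproj : ∀ μ : G.Path, star (t μ) * t μ * star (t μ) = star (t μ) := by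
    intro μ
    rw [ht.2.2.2.1 μ]
    have : t μ * t (G.s μ) = t μ := by
      rw [ht.2.2.1 μ (G.s μ) (G.r_of_vertex _ (G.d_s μ)).symm,
        σ.right_id, G.comp_id, one_smul]
    have hsym : star (t (G.s μ)) = t (G.s μ) := (ht.1 (G.s μ) (G.d_s μ)).1
    calc t (G.s μ) * star (t μ) = star (t μ * star (t (G.s μ))) := by
          rw [star_mul, star_star]
      _ = star (t μ) := by rw [hsym, this]
  have hη : t η * star (t η) * t η = t η := by
    have := hproj η
    have h2 := congrArg star this
    simpa [star_mul, star_star, mul_assoc] using h2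
  have hmce := ht.2.2.2.2 ν η F hF
  calc star (t ν) * t η
      = (star (t ν) * t ν * star (t ν)) * (t η * star (t η) * t η) := by
        rw [hproj, hη]
    _ = star (t ν) * ((t ν * star (t ν)) * (t η * star (t η))) * t η := by
        simp only [mul_assoc]
    _ = star (t ν) * (∑ l ∈ F, t l * star (t l)) * t η := by rw [hmce]
    _ = ∑ l ∈ F, star (t ν) * (t l * star (t l)) * t η := by
        rw [Finset.mul_sum, Finset.sum_mul]
    _ = ∑ l ∈ F, (starRingEnd ℂ (σ.c ν (α l)) * σ.c η (β l)) •
        (t (α l) * star (t (β l))) := by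
        refine Finset.sum_congr rfl fun l hl => ?_
        obtain ⟨ha1, ha2⟩ := hα l hl
        obtain ⟨hb1, hb2⟩ := hβ l hl
        have e1 : star (t ν) * t l = (starRingEnd ℂ (σ.c ν (α l))) • t (α l) :=
          tck_star_mul G σ ht ha1 ha2
        have e2 : star (t η) * t l = (starRingEnd ℂ (σ.c η (β l))) • t (β l) :=
          tck_star_mul G σ ht hb1 hb2
        have e3 : star (t l) * t η = (σ.c η (β l)) • star (t (β l)) := by
          have := congrArg star e2
          simpa [star_mul, star_star, star_smul] using this
        calc star (t ν) * (t l * star (t l)) * t η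
            = (star (t ν) * t l) * (star (t l) * t η) := by
              simp only [mul_assoc]
          _ = ((starRingEnd ℂ (σ.c ν (α l))) • t (α l)) *
              ((σ.c η (β l)) • star (t (β l))) := by rw [e1, e3]
          _ = (starRingEnd ℂ (σ.c ν (α l)) * σ.c η (β l)) •
              (t (α l) * star (t (β l))) := by
              rw [smul_mul_smul_comm]  -- may need adjustment
end

section
/- Let Λ be a finitely aligned k-graph, let c be a T-valued 2-cocycle on Λ, and let t be a Toeplitz–Cuntz–Krieger (Λ,c)-family in a C*-algebra A. If v ∈ Λ^0, E ⊆ vΛ is finite and nonempty, and μ ∈ vΛ, then Δ(t)^E t_μ = t_μ Δ(t)^{Ext(μ;E)} (note Ext(μ;E) is a finite subset of s(μ)Λ since Λ is finitely aligned). -/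
open scoped BigOperators

section NPAux

private lemma aux_mul_np {M : Type*} [Monoid M] {ι : Type*} (f : ι → M)
    (hc : ∀ a b, Commute (f a) (f b)) (x : M) :
    ∀ S : Finset ι, (∀ a ∈ S, x * f a = x) →
      x * S.noncommProd f (Set.pairwise_of_forall _ _ fun a b => hc a b) = x := by
  classical
  intro S
  induction S using Finset.induction_on with
  | empty => intro _; rw [Finset.noncommProd_empty, mul_one]
  | @insert a S ha ih =>
    intro hx
    rw [Finset.noncommProd_insert_of_notMem _ _ _ _ ha, ← mul_assoc,
      hx a (Finset.mem_insert_self a S)]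
    exact ih fun b hb => hx b (Finset.mem_insert_of_mem hb)

private lemma aux_np_absorb {M : Type*} [Monoid M] {ι : Type*} [DecidableEq ι] (f : ι → M)
    (hc : ∀ a b, Commute (f a) (f b)) {a : ι} {S : Finset ι}
    (ha : a ∈ S) (hidem : f a * f a = f a) :
    f a * S.noncommProd f (Set.pairwise_of_forall _ _ fun a b => hc a b)
      = S.noncommProd f (Set.pairwise_of_forall _ _ fun a b => hc a b) := by
  have h1 : S.noncommProd f (Set.pairwise_of_forall _ _ fun a b => hc a b)
      = f a * (S.erase a).noncommProd f (Set.pairwise_of_forall _ _ fun a b => hc a b) := by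
    conv_lhs => rw [← Finset.insert_erase ha]
    rw [Finset.noncommProd_insert_of_notMem _ _ _ _ (Finset.notMem_erase a S)]
  rw [h1, ← mul_assoc, hidem]

private lemma aux_np_union {M : Type*} [Monoid M] {ι : Type*} [DecidableEq ι] (f : ι → M)
    (hc : ∀ a b, Commute (f a) (f b)) :
    ∀ S₁ S₂ : Finset ι, (∀ a ∈ S₁, f a * f a = f a) →
      S₁.noncommProd f (Set.pairwise_of_forall _ _ fun a b => hc a b) * S₂.noncommProd f (Set.pairwise_of_forall _ _ fun a b => hc a b)
        = (S₁ ∪ S₂).noncommProd f (Set.pairwise_of_forall _ _ fun a b => hc a b) := by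
  intro S₁
  induction S₁ using Finset.induction_on with
  | empty => intro S₂ _; rw [Finset.noncommProd_empty, one_mul, Finset.empty_union]
  | @insert a S₁ ha ih =>
    intro S₂ hidem
    rw [Finset.noncommProd_insert_of_notMem _ _ _ _ ha, mul_assoc,
      ih S₂ (fun b hb => hidem b (Finset.mem_insert_of_mem hb)), Finset.insert_union]
    by_cases haS : a ∈ S₁ ∪ S₂
    · rw [Finset.insert_eq_self.mpr haS]
      exact aux_np_absorb f hc haS (hidem a (Finset.mem_insert_self a S₁))
    · rw [Finset.noncommProd_insert_of_notMem _ _ _ _ haS]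

private lemma aux_np_sum {R : Type*} [Ring R] {ι : Type*} (q : ι → R) (p : R)
    (hc : ∀ a b, Commute (p - q a) (p - q b)) (hpp : p * p = p) :
    ∀ S : Finset ι, (∀ a ∈ S, p * q a = q a ∧ q a * p = q a) →
      (∀ a ∈ S, ∀ b ∈ S, a ≠ b → q a * q b = 0) →
      p * S.noncommProd (fun a => p - q a) (Set.pairwise_of_forall _ _ fun a b => hc a b) = p - ∑ a ∈ S, q a := by
  classical
  intro S
  induction S using Finset.induction_on with
  | empty => intro _ _; rw [Finset.noncommProd_empty, Finset.sum_empty, mul_one, sub_zero]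
  | @insert a S ha ih =>
    intro habs horth
    rw [Finset.noncommProd_insert_of_notMem _ _ _ _ ha, ← mul_assoc]
    have h1 : p * (p - q a) = p - q a := by
      rw [mul_sub, hpp, (habs a (Finset.mem_insert_self a S)).1]
    rw [h1, sub_mul,
      ih (fun b hb => habs b (Finset.mem_insert_of_mem hb))
        (fun b hb c hc' hbc => horth b (Finset.mem_insert_of_mem hb) c
          (Finset.mem_insert_of_mem hc') hbc)]
    have h2 : q a * S.noncommProd (fun a => p - q a) (Set.pairwise_of_forall _ _ fun a b => hc a b) = q a := by
      refine aux_mul_np _ hc (q a) S fun b hb => ?_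
      rw [mul_sub, (habs a (Finset.mem_insert_self a S)).2,
        horth a (Finset.mem_insert_self a S) b (Finset.mem_insert_of_mem hb)
          (by rintro rfl; exact ha hb), sub_zero]
    rw [h2, Finset.sum_insert ha]
    abel

end NPAux
namespace KGraph

section TCKAux

variable {k : ℕ} {G : KGraph k} {σ : G.Cocycle}
  {A : Type*} [NonUnitalNormedRing A] [StarRing A] [CStarRing A]
  [NormedSpace ℂ A] [IsScalarTower ℂ A A] [SMulCommClass ℂ A A]
  [StarModule ℂ A] [CompleteSpace A]

/-- `q_x = t_x t_x^*` in the unitization. -/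
private noncomputable def qq (t : G.Path → A) (x : G.Path) : Unitization ℂ A :=
  (t x : Unitization ℂ A) * star (t x : Unitization ℂ A)

variable {t : G.Path → A}

private lemma tU_vv (ht : G.IsTCK σ t) {w : G.Path} (hw : G.IsVertex w) :
    (t w : Unitization ℂ A) * (t w : Unitization ℂ A) = (t w : Unitization ℂ A) := by
  rw [← Unitization.inr_mul, (ht.1 w hw).2]

private lemma tU_star_v (ht : G.IsTCK σ t) {w : G.Path} (hw : G.IsVertex w) :
    star (t w : Unitization ℂ A) = (t w : Unitization ℂ A) := by
  rw [← Unitization.inr_star, (ht.1 w hw).1]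

private lemma qq_v (ht : G.IsTCK σ t) {w : G.Path} (hw : G.IsVertex w) :
    qq t w = (t w : Unitization ℂ A) := by
  simp only [qq]
  rw [tU_star_v ht hw, tU_vv ht hw]

private lemma tU_mul (ht : G.IsTCK σ t) {a b : G.Path} (h : G.s a = G.r b) :
    (t a : Unitization ℂ A) * (t b : Unitization ℂ A)
      = σ.c a b • (t (G.comp a b) : Unitization ℂ A) := by
  rw [← Unitization.inr_mul, ht.2.2.1 a b h, Unitization.inr_smul]

private lemma tU_star_mul_self (ht : G.IsTCK σ t) (a : G.Path) :
    star (t a : Unitization ℂ A) * (t a : Unitization ℂ A) = (t (G.s a) : Unitization ℂ A) := by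
  rw [← Unitization.inr_star, ← Unitization.inr_mul, ht.2.2.2.1 a]

private lemma tU_r_mul (ht : G.IsTCK σ t) (a : G.Path) :
    (t (G.r a) : Unitization ℂ A) * (t a : Unitization ℂ A) = (t a : Unitization ℂ A) := by
  rw [tU_mul ht (G.s_of_vertex (G.r a) (G.d_r a)), σ.left_id a, G.id_comp a, one_smul]

private lemma tU_mul_s (ht : G.IsTCK σ t) (a : G.Path) :
    (t a : Unitization ℂ A) * (t (G.s a) : Unitization ℂ A) = (t a : Unitization ℂ A) := by
  rw [tU_mul ht (G.r_of_vertex (G.s a) (G.d_s a)).symm, σ.right_id a, G.comp_id a, one_smul]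

private lemma qq_mul_t (ht : G.IsTCK σ t) (a : G.Path) :
    qq t a * (t a : Unitization ℂ A) = (t a : Unitization ℂ A) := by
  simp only [qq]
  rw [mul_assoc, tU_star_mul_self ht, tU_mul_s ht]

private lemma qq_idem (ht : G.IsTCK σ t) (a : G.Path) : qq t a * qq t a = qq t a := by
  have h : qq t a * qq t a
      = (qq t a * (t a : Unitization ℂ A)) * star (t a : Unitization ℂ A) := by
    simp only [qq, mul_assoc]
  rw [h, qq_mul_t ht]
  rfl

private lemma t_absorbA (ht : G.IsTCK σ t) (a : G.Path) :
    t (G.r a) * (t a * star (t a)) = t a * star (t a)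
      ∧ (t a * star (t a)) * t (G.r a) = t a * star (t a) := by
  have hra : G.IsVertex (G.r a) := G.d_r a
  have h2 : t (G.r a) * t a = t a := by
    rw [ht.2.2.1 (G.r a) a (G.s_of_vertex (G.r a) (G.d_r a)), σ.left_id a, G.id_comp a,
      one_smul]
  have h3 := congrArg star h2
  rw [star_mul, (ht.1 (G.r a) hra).1] at h3
  exact ⟨by rw [← mul_assoc, h2], by rw [mul_assoc, h3]⟩

private lemma t_absorb (ht : G.IsTCK σ t) {w a : G.Path} (hw : G.IsVertex w) (h : G.r a = w) :
    (t w : Unitization ℂ A) * qq t a = qq t a ∧ qq t a * (t w : Unitization ℂ A) = qq t a := by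
  subst h
  constructor
  · have h0 := congrArg (fun x : A => (x : Unitization ℂ A)) (t_absorbA ht a).1
    simpa only [Unitization.inr_mul, Unitization.inr_star, qq] using h0
  · have h0 := congrArg (fun x : A => (x : Unitization ℂ A)) (t_absorbA ht a).2
    simpa only [Unitization.inr_mul, Unitization.inr_star, qq] using h0

private lemma t_zeroA (ht : G.IsTCK σ t) {w a : G.Path} (hw : G.IsVertex w) (h : G.r a ≠ w) :
    t w * (t a * star (t a)) = 0 ∧ (t a * star (t a)) * t w = 0 := by
  have hra : G.IsVertex (G.r a) := G.d_r a
  have h0 : t w * t a = 0 := by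
    have h2 : t (G.r a) * t a = t a := by
      rw [ht.2.2.1 (G.r a) a (G.s_of_vertex (G.r a) (G.d_r a)), σ.left_id a, G.id_comp a,
        one_smul]
    rw [← h2, ← mul_assoc, ht.2.1 w (G.r a) hw hra (Ne.symm h), zero_mul]
  have h3 := congrArg star h0
  rw [star_mul, (ht.1 w hw).1, star_zero] at h3
  exact ⟨by rw [← mul_assoc, h0, zero_mul], by rw [mul_assoc, h3, mul_zero]⟩

private lemma t_zero (ht : G.IsTCK σ t) {w a : G.Path} (hw : G.IsVertex w) (h : G.r a ≠ w) :
    (t w : Unitization ℂ A) * qq t a = 0 ∧ qq t a * (t w : Unitization ℂ A) = 0 := by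
  constructor
  · have h0 := congrArg (fun x : A => (x : Unitization ℂ A)) (t_zeroA ht hw h).1
    simpa only [Unitization.inr_mul, Unitization.inr_star, Unitization.inr_zero, qq] using h0
  · have h0 := congrArg (fun x : A => (x : Unitization ℂ A)) (t_zeroA ht hw h).2
    simpa only [Unitization.inr_mul, Unitization.inr_star, Unitization.inr_zero, qq] using h0

private lemma comm_tv_qq (ht : G.IsTCK σ t) {w : G.Path} (hw : G.IsVertex w) (a : G.Path) :
    Commute ((t w : Unitization ℂ A)) (qq t a) := by
  by_cases h : G.r a = w
  · have h1 := t_absorb ht hw h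
    exact (h1.1.trans h1.2.symm : _)
  · have h1 := t_zero ht hw h
    exact (h1.1.trans h1.2.symm : _)

private lemma mce_symm (G : KGraph k) (a b : G.Path) : G.MCE a b = G.MCE b a := by
  ext l
  constructor
  · rintro ⟨h1, h2, h3⟩
    exact ⟨h1.trans (sup_comm _ _), h3, h2⟩
  · rintro ⟨h1, h2, h3⟩
    exact ⟨h1.trans (sup_comm _ _), h3, h2⟩

private lemma inr_sum {ι : Type*} (F : Finset ι) (f : ι → A) :
    ((∑ l ∈ F, f l : A) : Unitization ℂ A) = ∑ l ∈ F, (f l : Unitization ℂ A) :=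
  map_sum (Unitization.inrNonUnitalAlgHom ℂ A) f F

private lemma ck4U (ht : G.IsTCK σ t) (a b : G.Path) (F : Finset G.Path)
    (hF : (F : Set G.Path) = G.MCE a b) :
    qq t a * qq t b = ∑ l ∈ F, qq t l := by
  have h := ht.2.2.2.2 a b F hF
  calc qq t a * qq t b
      = ((t a * star (t a)) * (t b * star (t b)) : A) := by
        simp only [qq, Unitization.inr_mul, Unitization.inr_star]
    _ = ((∑ l ∈ F, t l * star (t l) : A) : Unitization ℂ A) := by rw [h]
    _ = ∑ l ∈ F, qq t l := by
        rw [inr_sum]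
        exact Finset.sum_congr rfl fun l _ => by
          simp only [qq, Unitization.inr_mul, Unitization.inr_star]

private lemma qq_comm (hFA : G.FinitelyAligned) (ht : G.IsTCK σ t) (a b : G.Path) :
    Commute (qq t a) (qq t b) := by
  have hF : (((hFA a b).toFinset : Finset G.Path) : Set G.Path) = G.MCE a b :=
    (hFA a b).coe_toFinset
  have h1 := ck4U ht a b _ hF
  have h2 := ck4U ht b a _ (hF.trans (mce_symm G a b))
  exact (h1.trans h2.symm : _)

private lemma qq_pushA (ht : G.IsTCK σ t) {μ α : G.Path} (h : G.s μ = G.r α) :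
    (t (G.comp μ α) * star (t (G.comp μ α))) * t μ = t μ * (t α * star (t α)) := by
  have hn := σ.norm_one μ α h
  have hc1 : (starRingEnd ℂ) (σ.c μ α) * σ.c μ α = 1 := by
    rw [mul_comm, Complex.mul_conj]
    norm_cast
    rw [Complex.normSq_eq_norm_sq, hn, one_pow]
  have hT : t (G.comp μ α) = (starRingEnd ℂ) (σ.c μ α) • (t μ * t α) := by
    rw [ht.2.2.1 μ α h, smul_smul, hc1, one_smul]
  have hstarc : star ((starRingEnd ℂ) (σ.c μ α)) = σ.c μ α := by
    simp [Complex.star_def]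
  have hQ : t (G.comp μ α) * star (t (G.comp μ α))
      = t μ * ((t α * star (t α)) * star (t μ)) := by
    rw [hT, star_smul, smul_mul_assoc, mul_smul_comm, smul_smul, hstarc, hc1, one_smul,
      star_mul]
    simp only [mul_assoc]
  have habs : (t α * star (t α)) * t (G.s μ) = t α * star (t α) := by
    have hrv : G.IsVertex (G.r α) := G.d_r α
    have h2 : t (G.r α) * t α = t α := by
      rw [ht.2.2.1 (G.r α) α (G.s_of_vertex (G.r α) (G.d_r α)), σ.left_id α, G.id_comp α,
        one_smul]
    have h3 := congrArg star h2
    rw [star_mul, (ht.1 (G.r α) hrv).1] at h3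
    rw [h, mul_assoc, h3]
  calc (t (G.comp μ α) * star (t (G.comp μ α))) * t μ
      = t μ * ((t α * star (t α)) * (star (t μ) * t μ)) := by
        rw [hQ]; simp only [mul_assoc]
    _ = t μ * ((t α * star (t α)) * t (G.s μ)) := by rw [ht.2.2.2.1 μ]
    _ = t μ * (t α * star (t α)) := by rw [habs]

private lemma qq_push (ht : G.IsTCK σ t) {μ α : G.Path} (h : G.s μ = G.r α) :
    qq t (G.comp μ α) * (t μ : Unitization ℂ A) = (t μ : Unitization ℂ A) * qq t α := by
  have h0 := congrArg (fun x : A => (x : Unitization ℂ A)) (qq_pushA ht h)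
  simpa only [Unitization.inr_mul, Unitization.inr_star, qq] using h0

end TCKAux

end KGraph

/-- `Δ(t)^E t_μ = t_μ Δ(t)^{Ext(μ;E)}`. -/
theorem stmt4 {k : ℕ} (G : KGraph k) (hFA : G.FinitelyAligned) (σ : G.Cocycle)
    {A : Type*} [NonUnitalNormedRing A] [StarRing A] [CStarRing A]
    [NormedSpace ℂ A] [IsScalarTower ℂ A A] [SMulCommClass ℂ A A]
    [StarModule ℂ A] [CompleteSpace A]
    (t : G.Path → A) (ht : G.IsTCK σ t)
    (v : G.Path) (hv : G.IsVertex v)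
    (E : Finset G.Path) (hEne : E.Nonempty) (hE : ∀ l ∈ E, G.r l = v)
    (μ : G.Path) (hμ : G.r μ = v)
    (Fext : Finset G.Path)
    (hFext : (Fext : Set G.Path) = G.Ext μ (E : Set G.Path)) :
    G.Delta t v E * t μ = t μ * G.Delta t (G.s μ) Fext := by
  classical
  have hsv : G.IsVertex (G.s μ) := G.d_s μ
  -- global commuting families
  have hgc : ∀ a b : G.Path,
      Commute ((t v : Unitization ℂ A) - KGraph.qq t a)
        ((t v : Unitization ℂ A) - KGraph.qq t b) := fun a b =>
    (((Commute.refl _).sub_right (KGraph.comm_tv_qq ht hv b)).sub_left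
      (((KGraph.comm_tv_qq ht hv a).symm).sub_right (KGraph.qq_comm hFA ht a b)))
  have hhc : ∀ a b : G.Path,
      Commute ((t (G.s μ) : Unitization ℂ A) - KGraph.qq t a)
        ((t (G.s μ) : Unitization ℂ A) - KGraph.qq t b) := fun a b =>
    (((Commute.refl _).sub_right (KGraph.comm_tv_qq ht hsv b)).sub_left
      (((KGraph.comm_tv_qq ht hsv a).symm).sub_right (KGraph.qq_comm hFA ht a b)))
  -- membership facts
  have hExtmem : ∀ {α : G.Path}, α ∈ Fext →
      (G.s μ = G.r α ∧ ∃ ν ∈ (E : Set G.Path), G.comp μ α ∈ G.MCE μ ν) := by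
    intro α hα
    have h1 : α ∈ G.Ext μ (E : Set G.Path) := by
      rw [← hFext]; exact Finset.mem_coe.mpr hα
    exact h1
  set X : G.Path → Finset G.Path :=
    fun ν => Fext.filter (fun α => G.comp μ α ∈ G.MCE μ ν) with hXdef
  -- degree determination
  have hdeg : ∀ {ν α β : G.Path}, G.s μ = G.r α → G.s μ = G.r β →
      G.comp μ α ∈ G.MCE μ ν → G.comp μ β ∈ G.MCE μ ν → G.d α = G.d β := by
    intro ν α β hα hβ h1 h2
    obtain ⟨hd1, -, -⟩ := h1
    obtain ⟨hd2, -, -⟩ := h2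
    have e1 : G.d μ + G.d α = G.d μ ⊔ G.d ν := (G.d_comp μ α hα).symm.trans hd1
    have e2 : G.d μ + G.d β = G.d μ ⊔ G.d ν := (G.d_comp μ β hβ).symm.trans hd2
    exact add_left_cancel (e1.trans e2.symm)
  -- uniqueness of factorization
  have hfac : ∀ {α β : G.Path}, G.s μ = G.r α → G.s μ = G.r β → G.d α = G.d β →
      G.comp μ α = G.comp μ β → α = β := by
    intro α β hα hβ hd hcomp
    obtain ⟨P, hP, hPu⟩ := G.factor (G.comp μ α) (G.d μ) (G.d α) (G.d_comp μ α hα)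
    have e1 := hPu (μ, α) ⟨rfl, rfl, hα, rfl⟩
    have e2 := hPu (μ, β) ⟨rfl, hd.symm, hβ, hcomp.symm⟩
    exact congrArg Prod.snd (e1.trans e2.symm)
  -- orthogonality within X ν
  have hXorth : ∀ {ν : G.Path}, ∀ α ∈ X ν, ∀ β ∈ X ν, α ≠ β →
      KGraph.qq t α * KGraph.qq t β = (0 : Unitization ℂ A) := by
    intro ν α hαX β hβX hne
    obtain ⟨hαF, hαM⟩ := Finset.mem_filter.mp hαX
    obtain ⟨hβF, hβM⟩ := Finset.mem_filter.mp hβX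
    have hrα := (hExtmem hαF).1
    have hrβ := (hExtmem hβF).1
    have hdαβ : G.d α = G.d β := hdeg hrα hrβ hαM hβM
    have hempty : G.MCE α β = ∅ := by
      ext ρ
      simp only [Set.mem_empty_iff_false, iff_false]
      rintro ⟨hdρ, ⟨γ, hγ1, hγ2⟩, ⟨δ, hδ1, hδ2⟩⟩
      have hργ : ρ = α := by
        have hγ0 : G.d γ = 0 := by
          have h3 := G.d_comp α γ hγ1
          rw [hγ2, hdρ, ← hdαβ, sup_idem] at h3
          exact (left_eq_add.mp h3)
        have hγs : γ = G.s α := ((G.r_of_vertex γ hγ0).symm).trans hγ1.symm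
        rw [← hγ2, hγs, G.comp_id]
      have hρδ : ρ = β := by
        have hδ0 : G.d δ = 0 := by
          have h3 := G.d_comp β δ hδ1
          rw [hδ2, hdρ, hdαβ, sup_idem] at h3
          exact (left_eq_add.mp h3)
        have hδs : δ = G.s β := ((G.r_of_vertex δ hδ0).symm).trans hδ1.symm
        rw [← hδ2, hδs, G.comp_id]
      exact hne (hργ.symm.trans hρδ)
    have h4 := KGraph.ck4U ht α β ∅ (by simp [hempty])
    simpa using h4
  -- CK4 rewritten over X ν
  have hXsum : ∀ ν ∈ E, KGraph.qq t ν * KGraph.qq t μ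
      = ∑ α ∈ X ν, KGraph.qq t (G.comp μ α) := by
    intro ν hν
    have himg : (((X ν).image (G.comp μ) : Finset G.Path) : Set G.Path) = G.MCE ν μ := by
      rw [Finset.coe_image]
      ext τ
      constructor
      · rintro ⟨α, hαX, rfl⟩
        have hm := (Finset.mem_filter.mp (Finset.mem_coe.mp hαX)).2
        rw [← KGraph.mce_symm G μ ν]
        exact hm
      · intro hτ
        obtain ⟨hdτ, ⟨β, hβ1, hβ2⟩, ⟨α, hα1, hα2⟩⟩ := hτ
        refine ⟨α, ?_, hα2⟩
        have hαExt : α ∈ G.Ext μ (E : Set G.Path) := by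
          refine ⟨hα1, ν, Finset.mem_coe.mpr hν, ?_⟩
          rw [hα2, KGraph.mce_symm G μ ν]
          exact ⟨hdτ, ⟨β, hβ1, hβ2⟩, ⟨α, hα1, hα2⟩⟩
        have hαF : α ∈ Fext := by
          rw [← Finset.mem_coe, hFext]; exact hαExt
        refine Finset.mem_coe.mpr (Finset.mem_filter.mpr ⟨hαF, ?_⟩)
        rw [hα2, KGraph.mce_symm G μ ν]
        exact ⟨hdτ, ⟨β, hβ1, hβ2⟩, ⟨α, hα1, hα2⟩⟩
    have hck := KGraph.ck4U ht ν μ _ himg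
    rw [hck, Finset.sum_image ?_]
    intro α hα β hβ hcomp
    have hrα := (hExtmem (Finset.mem_of_mem_filter α hα)).1
    have hrβ := (hExtmem (Finset.mem_of_mem_filter β hβ)).1
    exact hfac hrα hrβ
      (hdeg hrα hrβ (Finset.mem_filter.mp hα).2 (Finset.mem_filter.mp hβ).2) hcomp
  -- key single-factor pushthrough
  have hKEY : ∀ ν ∈ E, ((t v : Unitization ℂ A) - KGraph.qq t ν) * (t μ : Unitization ℂ A)
      = (t μ : Unitization ℂ A) * ((t (G.s μ) : Unitization ℂ A)
          * (X ν).noncommProd (fun α => (t (G.s μ) : Unitization ℂ A) - KGraph.qq t α)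
              (Set.pairwise_of_forall _ _ fun a b => hhc a b)) := by
    intro ν hν
    have hsum := aux_np_sum (KGraph.qq t) ((t (G.s μ) : Unitization ℂ A)) hhc
      (KGraph.tU_vv ht hsv) (X ν)
      (fun α hα => KGraph.t_absorb ht hsv
        ((hExtmem (Finset.mem_of_mem_filter α hα)).1).symm)
      (fun a ha b hb hab => hXorth a ha b hb hab)
    rw [hsum]
    have e1 : (t v : Unitization ℂ A) * (t μ : Unitization ℂ A) = (t μ : Unitization ℂ A) := by
      rw [← hμ]; exact KGraph.tU_r_mul ht μ
    have e3 : KGraph.qq t ν * (t μ : Unitization ℂ A)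
        = (t μ : Unitization ℂ A) * ∑ α ∈ X ν, KGraph.qq t α := by
      conv_lhs => rw [← KGraph.qq_mul_t ht μ]
      rw [← mul_assoc, hXsum ν hν, Finset.sum_mul,
        Finset.sum_congr rfl (fun α hα =>
          KGraph.qq_push ht (hExtmem (Finset.mem_of_mem_filter α hα)).1),
        ← Finset.mul_sum]
    rw [sub_mul, mul_sub, e1, KGraph.tU_mul_s ht μ, e3]
  -- product absorption lemma
  have hPNP : ∀ Y₁ Y₂ : Finset G.Path, Y₁ ⊆ Fext →
      ((t (G.s μ) : Unitization ℂ A)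
          * Y₁.noncommProd (fun α => (t (G.s μ) : Unitization ℂ A) - KGraph.qq t α)
              (Set.pairwise_of_forall _ _ fun a b => hhc a b))
        * ((t (G.s μ) : Unitization ℂ A)
          * Y₂.noncommProd (fun α => (t (G.s μ) : Unitization ℂ A) - KGraph.qq t α)
              (Set.pairwise_of_forall _ _ fun a b => hhc a b))
      = (t (G.s μ) : Unitization ℂ A)
          * (Y₁ ∪ Y₂).noncommProd (fun α => (t (G.s μ) : Unitization ℂ A) - KGraph.qq t α)
              (Set.pairwise_of_forall _ _ fun a b => hhc a b) := by
    intro Y₁ Y₂ hY₁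
    have hpc : Commute ((t (G.s μ) : Unitization ℂ A))
        (Y₁.noncommProd (fun α => (t (G.s μ) : Unitization ℂ A) - KGraph.qq t α)
          (Set.pairwise_of_forall _ _ fun a b => hhc a b)) :=
      Finset.noncommProd_commute _ _ _ _
        (fun x _ => (Commute.refl _).sub_right (KGraph.comm_tv_qq ht hsv x))
    have hidem : ∀ a ∈ Y₁,
        ((t (G.s μ) : Unitization ℂ A) - KGraph.qq t a)
          * ((t (G.s μ) : Unitization ℂ A) - KGraph.qq t a)
        = ((t (G.s μ) : Unitization ℂ A) - KGraph.qq t a) := by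
      intro a ha
      have habs := KGraph.t_absorb ht hsv ((hExtmem (hY₁ ha)).1).symm
      rw [sub_mul, mul_sub, mul_sub, KGraph.tU_vv ht hsv, habs.1, habs.2, KGraph.qq_idem ht a]
      abel
    have h1 : ((t (G.s μ) : Unitization ℂ A)
          * Y₁.noncommProd (fun α => (t (G.s μ) : Unitization ℂ A) - KGraph.qq t α)
              (Set.pairwise_of_forall _ _ fun a b => hhc a b))
        * ((t (G.s μ) : Unitization ℂ A)
          * Y₂.noncommProd (fun α => (t (G.s μ) : Unitization ℂ A) - KGraph.qq t α)
              (Set.pairwise_of_forall _ _ fun a b => hhc a b))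
      = (t (G.s μ) : Unitization ℂ A)
          * ((Y₁.noncommProd (fun α => (t (G.s μ) : Unitization ℂ A) - KGraph.qq t α)
              (Set.pairwise_of_forall _ _ fun a b => hhc a b) * (t (G.s μ) : Unitization ℂ A))
            * Y₂.noncommProd (fun α => (t (G.s μ) : Unitization ℂ A) - KGraph.qq t α)
              (Set.pairwise_of_forall _ _ fun a b => hhc a b)) := by
      simp only [mul_assoc]
    rw [h1, ← hpc.eq, ← mul_assoc, ← mul_assoc, KGraph.tU_vv ht hsv, mul_assoc,
      aux_np_union _ hhc Y₁ Y₂ hidem]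
  -- main induction
  have hmain : ∀ E' : Finset G.Path, E' ⊆ E →
      (t v : Unitization ℂ A)
          * E'.noncommProd (fun l => (t v : Unitization ℂ A) - KGraph.qq t l)
              (Set.pairwise_of_forall _ _ fun a b => hgc a b)
          * (t μ : Unitization ℂ A)
        = (t μ : Unitization ℂ A) * ((t (G.s μ) : Unitization ℂ A)
            * (E'.biUnion X).noncommProd
                (fun α => (t (G.s μ) : Unitization ℂ A) - KGraph.qq t α)
                (Set.pairwise_of_forall _ _ fun a b => hhc a b)) := by
    intro E'
    induction E' using Finset.induction_on with
    | empty =>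
      intro _
      simp only [Finset.noncommProd_empty, Finset.biUnion_empty, mul_one]
      rw [KGraph.tU_mul_s ht μ, ← hμ]
      exact KGraph.tU_r_mul ht μ
    | @insert ν E₀ hν ih =>
      intro hsub
      have hνE : ν ∈ E := hsub (Finset.mem_insert_self ν E₀)
      have hsub₀ : E₀ ⊆ E := fun x hx => hsub (Finset.mem_insert_of_mem hx)
      rw [Finset.noncommProd_insert_of_notMem _ _ _ _ hν, Finset.biUnion_insert]
      have hcomm1 : (t v : Unitization ℂ A) * ((t v : Unitization ℂ A) - KGraph.qq t ν)
          = ((t v : Unitization ℂ A) - KGraph.qq t ν) * (t v : Unitization ℂ A) :=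
        ((Commute.refl _).sub_right (KGraph.comm_tv_qq ht hv ν)).eq
      have hstep : (t v : Unitization ℂ A)
            * (((t v : Unitization ℂ A) - KGraph.qq t ν)
              * E₀.noncommProd (fun l => (t v : Unitization ℂ A) - KGraph.qq t l)
                  (Set.pairwise_of_forall _ _ fun a b => hgc a b))
            * (t μ : Unitization ℂ A)
          = ((t v : Unitization ℂ A) - KGraph.qq t ν)
            * ((t v : Unitization ℂ A)
              * E₀.noncommProd (fun l => (t v : Unitization ℂ A) - KGraph.qq t l)
                  (Set.pairwise_of_forall _ _ fun a b => hgc a b)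
              * (t μ : Unitization ℂ A)) := by
        simp only [← mul_assoc]
        rw [hcomm1]
      rw [hstep, ih hsub₀, ← mul_assoc, hKEY ν hνE, mul_assoc,
        hPNP (X ν) (E₀.biUnion X) (Finset.filter_subset _ _)]
  -- identify the Delta's
  have hbiUnion : E.biUnion X = Fext := by
    ext α
    simp only [Finset.mem_biUnion]
    constructor
    · rintro ⟨ν, hν, hα⟩
      exact Finset.mem_of_mem_filter α hα
    · intro hα
      obtain ⟨hr, ν, hν, hm⟩ := hExtmem hα
      exact ⟨ν, Finset.mem_coe.mp hν, Finset.mem_filter.mpr ⟨hα, hm⟩⟩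
  have hsnd : ∀ x : Unitization ℂ A, x.fst = 0 → (x.snd : Unitization ℂ A) = x := by
    intro x hx
    conv_rhs => rw [← Unitization.inl_fst_add_inr_snd_eq x]
    rw [hx, Unitization.inl_zero, zero_add]
  have hinrqv : ((t v * star (t v) : A) : Unitization ℂ A) = (t v : Unitization ℂ A) := by
    rw [(ht.1 v hv).1, (ht.1 v hv).2]
  have hinrqs : ((t (G.s μ) * star (t (G.s μ)) : A) : Unitization ℂ A)
      = (t (G.s μ) : Unitization ℂ A) := by
    rw [(ht.1 (G.s μ) hsv).1, (ht.1 (G.s μ) hsv).2]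
  have hgcoe : ∀ l : G.Path, ((t v * star (t v) - t l * star (t l) : A) : Unitization ℂ A)
      = (t v : Unitization ℂ A) - KGraph.qq t l := by
    intro l
    rw [Unitization.inr_sub, hinrqv]
    congr 1
    simp only [KGraph.qq, Unitization.inr_mul, Unitization.inr_star]
  have hhcoe : ∀ l : G.Path,
      ((t (G.s μ) * star (t (G.s μ)) - t l * star (t l) : A) : Unitization ℂ A)
      = (t (G.s μ) : Unitization ℂ A) - KGraph.qq t l := by
    intro l
    rw [Unitization.inr_sub, hinrqs]
    congr 1
    simp only [KGraph.qq, Unitization.inr_mul, Unitization.inr_star]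
  have hcondE : (E : Set G.Path).Pairwise (Function.onFun Commute
      (fun l => ((t v * star (t v) - t l * star (t l) : A) : Unitization ℂ A))) := by
    intro a _ b _ _
    simp only [Function.onFun, hgcoe]
    exact hgc a b
  have hcondF : (Fext : Set G.Path).Pairwise (Function.onFun Commute
      (fun l => ((t (G.s μ) * star (t (G.s μ)) - t l * star (t l) : A) : Unitization ℂ A))) := by
    intro a _ b _ _
    simp only [Function.onFun, hhcoe]
    exact hhc a b
  have hDv : ((G.Delta t v E : A) : Unitization ℂ A)
      = (t v : Unitization ℂ A)
          * E.noncommProd (fun l => (t v : Unitization ℂ A) - KGraph.qq t l)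
              (Set.pairwise_of_forall _ _ fun a b => hgc a b) := by
    unfold KGraph.Delta
    rw [dif_pos hcondE]
    have hnp : E.noncommProd
        (fun l => ((t v * star (t v) - t l * star (t l) : A) : Unitization ℂ A)) hcondE
        = E.noncommProd (fun l => (t v : Unitization ℂ A) - KGraph.qq t l)
            (Set.pairwise_of_forall _ _ fun a b => hgc a b) :=
      Finset.noncommProd_congr rfl (fun x _ => hgcoe x) _
    rw [hnp, hinrqv]
    refine hsnd _ ?_
    rw [Unitization.fst_mul, Unitization.fst_inr, zero_mul]
  have hDs : ((G.Delta t (G.s μ) Fext : A) : Unitization ℂ A)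
      = (t (G.s μ) : Unitization ℂ A)
          * Fext.noncommProd (fun l => (t (G.s μ) : Unitization ℂ A) - KGraph.qq t l)
              (Set.pairwise_of_forall _ _ fun a b => hhc a b) := by
    unfold KGraph.Delta
    rw [dif_pos hcondF]
    have hnp : Fext.noncommProd
        (fun l => ((t (G.s μ) * star (t (G.s μ)) - t l * star (t l) : A) : Unitization ℂ A))
          hcondF
        = Fext.noncommProd (fun l => (t (G.s μ) : Unitization ℂ A) - KGraph.qq t l)
            (Set.pairwise_of_forall _ _ fun a b => hhc a b) :=
      Finset.noncommProd_congr rfl (fun x _ => hhcoe x) _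
    rw [hnp, hinrqs]
    refine hsnd _ ?_
    rw [Unitization.fst_mul, Unitization.fst_inr, zero_mul]
  apply Unitization.inr_injective (R := ℂ)
  rw [Unitization.inr_mul, Unitization.inr_mul, hDv, hDs, ← hbiUnion]
  exact hmain E (subset_refl E)
end

section
/- Let Λ be a finitely aligned k-graph and c a T-valued 2-cocycle on Λ. There is a unique family {T_μ : μ ∈ Λ} of bounded linear operators on ℓ²(Λ) such that T_μ h_ν = c(μ,ν) h_{μν} whenever s(μ) = r(ν) and T_μ h_ν = 0 whenever s(μ) ≠ r(ν); moreover this family is a Toeplitz–Cuntz–Krieger (Λ,c)-family in the C*-algebra B(ℓ²(Λ)) of bounded operators on ℓ²(Λ). -/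
open scoped BigOperators

/- Statement 5: the path-space (Toeplitz) representation on `ℓ²(Λ)`: there is a
unique family of bounded operators with `T_μ h_ν = c(μ,ν) h_{μν}` (and `0` for
non-composable pairs), and any such family is a Toeplitz–Cuntz–Krieger
`(Λ,c)`-family in `B(ℓ²(Λ))`. -/

namespace Stmt5Aux
open scoped ENNReal NNReal

open scoped Classical

variable {k : ℕ} (G : KGraph k)

lemma comp_left_cancel {μ α β : G.Path} (hα : G.s μ = G.r α) (hβ : G.s μ = G.r β)
    (h : G.comp μ α = G.comp μ β) : α = β := by
  have hd : G.d α = G.d β := by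
    have h1 := G.d_comp μ α hα
    have h2 := G.d_comp μ β hβ
    rw [h, h2] at h1
    exact (add_left_cancel h1).symm
  obtain ⟨p, hp, hu⟩ := G.factor (G.comp μ α) (G.d μ) (G.d α) (G.d_comp μ α hα)
  have e1 := hu (μ, α) ⟨rfl, rfl, hα, rfl⟩
  have e2 := hu (μ, β) ⟨rfl, hd.symm, hβ, h.symm⟩
  exact congrArg Prod.snd (e1.trans e2.symm)

lemma factor_unique_of_deg {l₁ l₂ η₁ η₂ τ : G.Path} (hd : G.d l₁ = G.d l₂)
    (h₁ : G.s l₁ = G.r η₁) (hc₁ : G.comp l₁ η₁ = τ)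
    (h₂ : G.s l₂ = G.r η₂) (hc₂ : G.comp l₂ η₂ = τ) : l₁ = l₂ := by
  obtain ⟨p, hp, hu⟩ := G.factor τ (G.d l₁) (G.d η₁) (by rw [← hc₁, G.d_comp _ _ h₁])
  have a1 : G.d τ = G.d l₁ + G.d η₁ := by rw [← hc₁, G.d_comp _ _ h₁]
  have a2 : G.d τ = G.d l₂ + G.d η₂ := by rw [← hc₂, G.d_comp _ _ h₂]
  have hdη : G.d η₂ = G.d η₁ := by
    rw [hd] at a1; rw [a2] at a1; exact add_left_cancel a1
  have e1 := hu (l₁, η₁) ⟨rfl, rfl, h₁, hc₁⟩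
  have e2 := hu (l₂, η₂) ⟨hd.symm, hdη, h₂, hc₂⟩
  exact congrArg Prod.fst (e1.trans e2.symm)

lemma mce_sub {μ ν l η τ : G.Path} (hl : l ∈ G.MCE μ ν) (hη : G.s l = G.r η)
    (hc : G.comp l η = τ) :
    (∃ α, G.s μ = G.r α ∧ G.comp μ α = τ) ∧ (∃ β, G.s ν = G.r β ∧ G.comp ν β = τ) := by
  obtain ⟨hd, ⟨α, hα, hcα⟩, ⟨β, hβ, hcβ⟩⟩ := hl
  constructor
  · have hsα : G.s α = G.r η := by rw [← G.s_comp μ α hα, hcα]; exact hη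
    exact ⟨G.comp α η, by rw [G.r_comp α η hsα]; exact hα,
      by rw [← G.comp_assoc μ α η hα hsα, hcα, hc]⟩
  · have hsβ : G.s β = G.r η := by rw [← G.s_comp ν β hβ, hcβ]; exact hη
    exact ⟨G.comp β η, by rw [G.r_comp β η hsβ]; exact hβ,
      by rw [← G.comp_assoc ν β η hβ hsβ, hcβ, hc]⟩

lemma exists_mce {μ ν τ α β : G.Path} (hα : G.s μ = G.r α) (hcα : G.comp μ α = τ)
    (hβ : G.s ν = G.r β) (hcβ : G.comp ν β = τ) :
    ∃ l η, l ∈ G.MCE μ ν ∧ G.s l = G.r η ∧ G.comp l η = τ := by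
  have hdμ : G.d τ = G.d μ + G.d α := by rw [← hcα, G.d_comp _ _ hα]
  have hdν : G.d τ = G.d ν + G.d β := by rw [← hcβ, G.d_comp _ _ hβ]
  set m : Fin k → ℕ := G.d μ ⊔ G.d ν with hm
  have hμm : ∀ i, G.d μ i ≤ m i := fun i => by simp [hm, Pi.sup_apply]
  have hνm : ∀ i, G.d ν i ≤ m i := fun i => by simp [hm, Pi.sup_apply]
  have hmle : ∀ i, m i ≤ G.d τ i := by
    intro i
    have e1 := congrFun hdμ i
    have e2 := congrFun hdν i
    simp only [Pi.add_apply] at e1 e2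
    simp only [hm, Pi.sup_apply]
    omega
  obtain ⟨⟨l, η⟩, ⟨hdl, hdη, hsl, hcl⟩, _⟩ := G.factor τ m (fun i => G.d τ i - m i)
      (by funext i; have := hmle i; simp only [Pi.add_apply]; omega)
  have key : ∀ (ρ γ : G.Path), G.s ρ = G.r γ → G.comp ρ γ = τ →
      (∀ i, G.d ρ i ≤ m i) → ∃ δ, G.s ρ = G.r δ ∧ G.comp ρ δ = l := by
    intro ρ γ hγ hcγ hρm
    have hdlρ : G.d l = G.d ρ + fun i => m i - G.d ρ i := by
      funext i; have := hρm i; rw [hdl]; simp only [Pi.add_apply]; omega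
    obtain ⟨⟨ρ₁, δ⟩, ⟨hdρ₁, hdδ, hsδ, hcδ⟩, _⟩ := G.factor l (G.d ρ) _ hdlρ
    have hdτρ : G.d τ = G.d ρ + fun i => G.d τ i - G.d ρ i := by
      funext i; have h1 := hρm i; have h2 := hmle i; simp only [Pi.add_apply]; omega
    obtain ⟨p, hp, hu⟩ := G.factor τ (G.d ρ) _ hdτρ
    have hdγ : G.d γ = fun i => G.d τ i - G.d ρ i := by
      have hh : G.d τ = G.d ρ + G.d γ := by rw [← hcγ, G.d_comp _ _ hγ]
      funext i; have := congrFun hh i; simp only [Pi.add_apply] at this; omega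
    have e1 := hu (ρ, γ) ⟨rfl, hdγ, hγ, hcγ⟩
    have hsδη : G.s δ = G.r η := by rw [← G.s_comp ρ₁ δ hsδ, hcδ]; exact hsl
    have e2 := hu (ρ₁, G.comp δ η) ⟨hdρ₁, ?_, ?_, ?_⟩
    · have hρ1 : ρ = ρ₁ := congrArg Prod.fst (e1.trans e2.symm)
      exact ⟨δ, by rw [hρ1]; exact hsδ, by rw [hρ1]; exact hcδ⟩
    · funext i
      rw [G.d_comp _ _ hsδη]
      have b1 := congrFun hdδ i
      have b2 := congrFun hdη i
      have b3 := hρm i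
      have b4 := hmle i
      simp only [Pi.add_apply] at b1 b2 ⊢
      omega
    · rw [G.r_comp δ η hsδη]; exact hsδ
    · rw [← G.comp_assoc ρ₁ δ η hsδ hsδη, hcδ, hcl]
  obtain ⟨δμ, h1, h2⟩ := key μ α hα hcα hμm
  obtain ⟨δν, h3, h4⟩ := key ν β hβ hcβ hνm
  exact ⟨l, η, ⟨hdl, ⟨δμ, h1, h2⟩, ⟨δν, h3, h4⟩⟩, hsl, hcl⟩


variable {k : ℕ} (G : KGraph k) (σ : G.Cocycle)

open scoped Classical in
/-- The coordinate formula for the path-space operator `T_μ`. -/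
noncomputable def Tfun (μ : G.Path) (x : lp (fun _ : G.Path => ℂ) 2) : G.Path → ℂ :=
  fun l => if h : ∃ ν, G.s μ = G.r ν ∧ G.comp μ ν = l
    then σ.c μ h.choose * x h.choose else 0

lemma Tfun_comp {μ ν : G.Path} (hν : G.s μ = G.r ν) (x : lp (fun _ : G.Path => ℂ) 2) :
    Tfun G σ μ x (G.comp μ ν) = σ.c μ ν * x ν := by
  have h : ∃ ν', G.s μ = G.r ν' ∧ G.comp μ ν' = G.comp μ ν := ⟨ν, hν, rfl⟩
  have hc : h.choose = ν := comp_left_cancel G h.choose_spec.1 hν h.choose_spec.2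
  simp only [Tfun, dif_pos h, hc]

lemma Tfun_not {μ l : G.Path} (h : ¬ ∃ ν, G.s μ = G.r ν ∧ G.comp μ ν = l)
    (x : lp (fun _ : G.Path => ℂ) 2) : Tfun G σ μ x l = 0 := dif_neg h

lemma Tfun_memℓp (μ : G.Path) (x : lp (fun _ : G.Path => ℂ) 2) : Memℓp (Tfun G σ μ x) 2 := by
  apply memℓp_gen
  set e : {ν : G.Path // G.s μ = G.r ν} → G.Path := fun ν => G.comp μ ν.1 with he_def
  have he : Function.Injective e := fun a b hab => Subtype.ext (comp_left_cancel G a.2 b.2 hab)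
  have hz : ∀ l ∉ Set.range e, ‖Tfun G σ μ x l‖ ^ (2 : ℝ≥0∞).toReal = 0 := by
    intro l hl
    rw [Tfun_not G σ (fun ⟨ν, hν, hc⟩ => hl ⟨⟨ν, hν⟩, hc⟩) x]
    simp
  refine (Function.Injective.summable_iff he hz).mp ?_
  have hx : Summable (fun l : G.Path => ‖(x : ∀ _ : G.Path, ℂ) l‖ ^ (2 : ℝ≥0∞).toReal) :=
    (lp.memℓp x).summable (by norm_num)
  refine (hx.subtype {ν : G.Path | G.s μ = G.r ν}).congr ?_
  rintro ⟨ν, hν⟩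
  show ‖(x : ∀ _ : G.Path, ℂ) ν‖ ^ _ = ‖Tfun G σ μ x (G.comp μ ν)‖ ^ _
  rw [Tfun_comp G σ hν x, norm_mul, σ.norm_one _ _ hν, one_mul]

lemma Tfun_add (μ : G.Path) (x y : lp (fun _ : G.Path => ℂ) 2) (l : G.Path) :
    Tfun G σ μ (x + y) l = Tfun G σ μ x l + Tfun G σ μ y l := by
  classical
  simp only [Tfun]
  by_cases h : ∃ ν, G.s μ = G.r ν ∧ G.comp μ ν = l
  · rw [dif_pos h, dif_pos h, dif_pos h, lp.coeFn_add, Pi.add_apply, mul_add]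
  · rw [dif_neg h, dif_neg h, dif_neg h, add_zero]

lemma Tfun_smul (μ : G.Path) (c : ℂ) (x : lp (fun _ : G.Path => ℂ) 2) (l : G.Path) :
    Tfun G σ μ (c • x) l = c * Tfun G σ μ x l := by
  classical
  simp only [Tfun]
  by_cases h : ∃ ν, G.s μ = G.r ν ∧ G.comp μ ν = l
  · rw [dif_pos h, dif_pos h, lp.coeFn_smul, Pi.smul_apply, smul_eq_mul]; ring
  · rw [dif_neg h, dif_neg h, mul_zero]

/-- `T_μ` as a linear map. -/
noncomputable def TLin (μ : G.Path) :
    lp (fun _ : G.Path => ℂ) 2 →ₗ[ℂ] lp (fun _ : G.Path => ℂ) 2 where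
  toFun x := ⟨Tfun G σ μ x, Tfun_memℓp G σ μ x⟩
  map_add' x y := by
    apply lp.ext
    rw [lp.coeFn_add]
    funext l
    exact Tfun_add G σ μ x y l
  map_smul' c x := by
    apply lp.ext
    rw [RingHom.id_apply, lp.coeFn_smul]
    funext l
    rw [Pi.smul_apply, smul_eq_mul]
    exact Tfun_smul G σ μ c x l

lemma TLin_norm (μ : G.Path) (x : lp (fun _ : G.Path => ℂ) 2) :
    ‖TLin G σ μ x‖ ≤ 1 * ‖x‖ := by
  rw [one_mul]
  have hp : (0 : ℝ) < (2 : ℝ≥0∞).toReal := by norm_num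
  apply lp.norm_le_of_tsum_le hp (norm_nonneg x)
  rw [lp.norm_rpow_eq_tsum hp x]
  set e : {ν : G.Path // G.s μ = G.r ν} → G.Path := fun ν => G.comp μ ν.1 with he_def
  have he : Function.Injective e := fun a b hab => Subtype.ext (comp_left_cancel G a.2 b.2 hab)
  have hz : ∀ l ∉ Set.range e, ‖Tfun G σ μ x l‖ ^ (2 : ℝ≥0∞).toReal = 0 := by
    intro l hl
    rw [Tfun_not G σ (fun ⟨ν, hν, hc⟩ => hl ⟨⟨ν, hν⟩, hc⟩) x]
    simp
  have hx : Summable (fun l : G.Path => ‖(x : ∀ _ : G.Path, ℂ) l‖ ^ (2 : ℝ≥0∞).toReal) :=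
    (lp.memℓp x).summable (by norm_num)
  have hxs := hx.subtype {ν : G.Path | G.s μ = G.r ν}
  have hcongr : ∀ ν : {ν : G.Path // G.s μ = G.r ν},
      ‖Tfun G σ μ x (e ν)‖ ^ (2 : ℝ≥0∞).toReal
        = ‖(x : ∀ _ : G.Path, ℂ) ν.1‖ ^ (2 : ℝ≥0∞).toReal := by
    rintro ⟨ν, hν⟩
    show ‖Tfun G σ μ x (G.comp μ ν)‖ ^ _ = _
    rw [Tfun_comp G σ hν x, norm_mul, σ.norm_one _ _ hν, one_mul]
  have hsupp : Function.support
      (fun l => ‖Tfun G σ μ x l‖ ^ (2 : ℝ≥0∞).toReal) ⊆ Set.range e := by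
    intro l hl
    by_contra hnot
    exact hl (hz l hnot)
  have h1 : (∑' l, ‖Tfun G σ μ x l‖ ^ (2 : ℝ≥0∞).toReal)
      = ∑' ν : {ν : G.Path // G.s μ = G.r ν},
          ‖(x : ∀ _ : G.Path, ℂ) ν.1‖ ^ (2 : ℝ≥0∞).toReal := by
    rw [← Function.Injective.tsum_eq he hsupp]
    exact tsum_congr hcongr
  show (∑' l, ‖Tfun G σ μ x l‖ ^ (2 : ℝ≥0∞).toReal) ≤ _
  rw [h1]
  exact hxs.tsum_le_tsum_of_inj Subtype.val Subtype.val_injective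
    (fun c _ => by positivity) (fun ν => le_rfl) hx

/-- The path-space operator `T_μ` as a bounded operator. -/
noncomputable def Top (μ : G.Path) :
    lp (fun _ : G.Path => ℂ) 2 →L[ℂ] lp (fun _ : G.Path => ℂ) 2 :=
  LinearMap.mkContinuous (TLin G σ μ) 1 (TLin_norm G σ μ)

lemma Top_coord (μ : G.Path) (x : lp (fun _ : G.Path => ℂ) 2) (l : G.Path) :
    (Top G σ μ x : ∀ _ : G.Path, ℂ) l = Tfun G σ μ x l := rfl

lemma single_coord (ν l : G.Path) :
    (lp.single 2 ν (1 : ℂ) : ∀ _ : G.Path, ℂ) l = if l = ν then 1 else 0 := by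
  by_cases h : l = ν
  · subst h
    rw [lp.single_apply_self, if_pos rfl]
  · rw [lp.single_apply_ne _ _ _ h, if_neg h]

lemma smul_coord (c : ℂ) (x : lp (fun _ : G.Path => ℂ) 2) (l : G.Path) :
    ((c • x : lp (fun _ : G.Path => ℂ) 2) : ∀ _ : G.Path, ℂ) l = c * x l := by
  rw [lp.coeFn_smul, Pi.smul_apply, smul_eq_mul]

lemma Top_single_comp {μ ν : G.Path} (h : G.s μ = G.r ν) :
    Top G σ μ (lp.single 2 ν 1) = σ.c μ ν • lp.single 2 (G.comp μ ν) 1 := by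
  apply lp.ext
  funext l
  rw [Top_coord, smul_coord]
  by_cases hl : ∃ α, G.s μ = G.r α ∧ G.comp μ α = l
  · obtain ⟨α, hα, rfl⟩ := hl
    rw [Tfun_comp G σ hα, single_coord, single_coord]
    by_cases hαν : α = ν
    · subst hαν
      rw [if_pos rfl, if_pos rfl]
    · rw [if_neg hαν, if_neg (fun hc => hαν (comp_left_cancel G hα h hc)), mul_zero, mul_zero]
  · rw [Tfun_not G σ hl, single_coord, if_neg (fun hc : l = G.comp μ ν => hl ⟨ν, h, hc.symm⟩),
      mul_zero]

lemma Top_single_not {μ ν : G.Path} (h : G.s μ ≠ G.r ν) :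
    Top G σ μ (lp.single 2 ν 1) = 0 := by
  apply lp.ext
  funext l
  rw [Top_coord, lp.coeFn_zero, Pi.zero_apply]
  by_cases hl : ∃ α, G.s μ = G.r α ∧ G.comp μ α = l
  · obtain ⟨α, hα, rfl⟩ := hl
    rw [Tfun_comp G σ hα, single_coord,
      if_neg (fun hc : α = ν => h (hc ▸ hα)), mul_zero]
  · exact Tfun_not G σ hl _

lemma single_smul_one (x : lp (fun _ : G.Path => ℂ) 2) (ν : G.Path) :
    lp.single 2 ν ((x : ∀ _ : G.Path, ℂ) ν)
      = ((x : ∀ _ : G.Path, ℂ) ν) • (lp.single 2 ν (1 : ℂ) : lp (fun _ : G.Path => ℂ) 2) := by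
  apply lp.ext
  funext l
  rw [smul_coord]
  by_cases hl : l = ν
  · subst hl
    rw [lp.single_apply_self, single_coord, if_pos rfl, mul_one]
  · rw [lp.single_apply_ne _ _ _ hl, single_coord, if_neg hl, mul_zero]

lemma ext_of_single {A B : lp (fun _ : G.Path => ℂ) 2 →L[ℂ] lp (fun _ : G.Path => ℂ) 2}
    (h : ∀ ν, A (lp.single 2 ν 1) = B (lp.single 2 ν 1)) : A = B := by
  apply ContinuousLinearMap.ext
  intro x
  have hs : HasSum (fun ν : G.Path => lp.single 2 ν ((x : ∀ _ : G.Path, ℂ) ν)) x :=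
    lp.hasSum_single (by norm_num) x
  have h1 := hs.mapL A
  have h2 := hs.mapL B
  have key : ∀ ν, A (lp.single 2 ν ((x : ∀ _ : G.Path, ℂ) ν))
      = B (lp.single 2 ν ((x : ∀ _ : G.Path, ℂ) ν)) := by
    intro ν
    rw [single_smul_one G x ν, map_smul, map_smul, h ν]
  simp only [key] at h1
  exact h1.unique h2
lemma coord_eq_inner (x : lp (fun _ : G.Path => ℂ) 2) (τ : G.Path) :
    (inner ℂ (lp.single 2 τ (1 : ℂ)) x : ℂ) = (x : ∀ _ : G.Path, ℂ) τ := by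
  rw [lp.inner_single_left]
  simp [RCLike.inner_apply]

lemma star_coord
    (Tl : lp (fun _ : G.Path => ℂ) 2 →L[ℂ] lp (fun _ : G.Path => ℂ) 2)
    (y : lp (fun _ : G.Path => ℂ) 2) (τ : G.Path) :
    ((star Tl) y : ∀ _ : G.Path, ℂ) τ = (inner ℂ (Tl (lp.single 2 τ 1)) y : ℂ) := by
  rw [← coord_eq_inner G (star Tl y) τ, ContinuousLinearMap.star_eq_adjoint,
    ContinuousLinearMap.adjoint_inner_right]

lemma conj_mul_c {μ ν : G.Path} (h : G.s μ = G.r ν) :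
    (starRingEnd ℂ) (σ.c μ ν) * σ.c μ ν = 1 := by
  have h2 := RCLike.conj_mul (σ.c μ ν)
  rw [σ.norm_one μ ν h] at h2
  rw [h2]
  norm_num

section WithT

variable {T : G.Path → (lp (fun _ : G.Path => ℂ) 2 →L[ℂ] lp (fun _ : G.Path => ℂ) 2)}

lemma star_single_comp
    (hT : ∀ μ ν : G.Path,
      (G.s μ = G.r ν → T μ (lp.single 2 ν 1) = σ.c μ ν • lp.single 2 (G.comp μ ν) 1) ∧
      (G.s μ ≠ G.r ν → T μ (lp.single 2 ν 1) = 0))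
    {l ν : G.Path} (h : G.s l = G.r ν) :
    star (T l) (lp.single 2 (G.comp l ν) 1)
      = (starRingEnd ℂ) (σ.c l ν) • lp.single 2 ν 1 := by
  apply lp.ext
  funext τ
  rw [star_coord G, smul_coord G]
  by_cases hτ : G.s l = G.r τ
  · rw [(hT l τ).1 hτ, inner_smul_left, coord_eq_inner G, single_coord G]
    rw [single_coord G]
    by_cases hτν : τ = ν
    · subst hτν
      rw [if_pos rfl, if_pos rfl]
    · rw [if_neg (fun hc : G.comp l τ = G.comp l ν => hτν (comp_left_cancel G hτ h hc)),
        if_neg hτν, mul_zero, mul_zero]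
  · rw [(hT l τ).2 hτ, inner_zero_left, single_coord G,
      if_neg (fun hc : τ = ν => hτ (hc ▸ h)), mul_zero]

lemma star_single_not
    (hT : ∀ μ ν : G.Path,
      (G.s μ = G.r ν → T μ (lp.single 2 ν 1) = σ.c μ ν • lp.single 2 (G.comp μ ν) 1) ∧
      (G.s μ ≠ G.r ν → T μ (lp.single 2 ν 1) = 0))
    {l lam : G.Path} (h : ¬ ∃ ν, G.s l = G.r ν ∧ G.comp l ν = lam) :
    star (T l) (lp.single 2 lam 1) = 0 := by
  apply lp.ext
  funext τ
  rw [star_coord G, lp.coeFn_zero, Pi.zero_apply]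
  by_cases hτ : G.s l = G.r τ
  · rw [(hT l τ).1 hτ, inner_smul_left, coord_eq_inner G, single_coord G,
      if_neg (fun hc : G.comp l τ = lam => h ⟨τ, hτ, hc⟩), mul_zero]
  · rw [(hT l τ).2 hτ, inner_zero_left]

open scoped Classical in
lemma TT_single
    (hT : ∀ μ ν : G.Path,
      (G.s μ = G.r ν → T μ (lp.single 2 ν 1) = σ.c μ ν • lp.single 2 (G.comp μ ν) 1) ∧
      (G.s μ ≠ G.r ν → T μ (lp.single 2 ν 1) = 0))
    (μ τ : G.Path) :
    (T μ * star (T μ)) (lp.single 2 τ 1)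
      = if ∃ ν, G.s μ = G.r ν ∧ G.comp μ ν = τ then lp.single 2 τ 1 else 0 := by
  by_cases h : ∃ ν, G.s μ = G.r ν ∧ G.comp μ ν = τ
  · rw [if_pos h]
    obtain ⟨ν, hν, rfl⟩ := h
    rw [ContinuousLinearMap.mul_apply, star_single_comp G σ hT hν, map_smul,
      (hT μ ν).1 hν, smul_smul, conj_mul_c G σ hν, one_smul]
  · rw [if_neg h, ContinuousLinearMap.mul_apply, star_single_not G σ hT h, map_zero]

lemma vertex_single
    (hT : ∀ μ ν : G.Path,
      (G.s μ = G.r ν → T μ (lp.single 2 ν 1) = σ.c μ ν • lp.single 2 (G.comp μ ν) 1) ∧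
      (G.s μ ≠ G.r ν → T μ (lp.single 2 ν 1) = 0))
    {v : G.Path} (hv : G.IsVertex v) (τ : G.Path) :
    T v (lp.single 2 τ 1) = if G.r τ = v then lp.single 2 τ 1 else 0 := by
  have hs : G.s v = v := G.s_of_vertex v hv
  by_cases hτ : G.r τ = v
  · rw [if_pos hτ]
    have h1 : G.s v = G.r τ := by rw [hs, hτ]
    have h2 : G.comp v τ = τ := by have h3 := G.id_comp τ; rwa [hτ] at h3
    have h3 : σ.c v τ = 1 := by have h4 := σ.left_id τ; rwa [hτ] at h4
    rw [(hT v τ).1 h1, h2, h3, one_smul]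
  · rw [if_neg hτ, (hT v τ).2 (by rw [hs]; exact fun hh => hτ hh.symm)]

end WithT
section WithT2

variable {T : G.Path → (lp (fun _ : G.Path => ℂ) 2 →L[ℂ] lp (fun _ : G.Path => ℂ) 2)}

lemma mul_eq
    (hT : ∀ μ ν : G.Path,
      (G.s μ = G.r ν → T μ (lp.single 2 ν 1) = σ.c μ ν • lp.single 2 (G.comp μ ν) 1) ∧
      (G.s μ ≠ G.r ν → T μ (lp.single 2 ν 1) = 0))
    {μ ν : G.Path} (h : G.s μ = G.r ν) :
    T μ * T ν = σ.c μ ν • T (G.comp μ ν) := by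
  apply ext_of_single G
  intro τ
  rw [ContinuousLinearMap.mul_apply, ContinuousLinearMap.smul_apply]
  by_cases hτ : G.s ν = G.r τ
  · rw [(hT ν τ).1 hτ, map_smul, (hT μ (G.comp ν τ)).1 (by rw [G.r_comp ν τ hτ]; exact h),
      (hT (G.comp μ ν) τ).1 (by rw [G.s_comp μ ν h]; exact hτ),
      smul_smul, smul_smul, G.comp_assoc μ ν τ h hτ, σ.cocycle μ ν τ h hτ]
  · rw [(hT ν τ).2 hτ, map_zero, (hT (G.comp μ ν) τ).2 (by rw [G.s_comp μ ν h]; exact hτ),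
      smul_zero]

lemma isTCK
    (hT : ∀ μ ν : G.Path,
      (G.s μ = G.r ν → T μ (lp.single 2 ν 1) = σ.c μ ν • lp.single 2 (G.comp μ ν) 1) ∧
      (G.s μ ≠ G.r ν → T μ (lp.single 2 ν 1) = 0)) :
    G.IsTCK σ T := by
  classical
  refine ⟨?_, ?_, ?_, ?_, ?_⟩
  · -- vertices: projections
    intro v hv
    have hs : G.s v = v := G.s_of_vertex v hv
    have hr : G.r v = v := G.r_of_vertex v hv
    constructor
    · apply ext_of_single G
      intro ν
      by_cases hν : G.r ν = v
      · have h1 : G.s v = G.r ν := by rw [hs, hν]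
        have h2 : G.comp v ν = ν := by have h3 := G.id_comp ν; rwa [hν] at h3
        have h3 : σ.c v ν = 1 := by have h4 := σ.left_id ν; rwa [hν] at h4
        have h4 := star_single_comp G σ hT h1
        rw [h2, h3] at h4
        rw [h4, (hT v ν).1 h1, h2, h3]
        simp
      · have h1 : ¬ ∃ α, G.s v = G.r α ∧ G.comp v α = ν := by
          rintro ⟨α, hα, hc⟩
          have h2 : G.r α = v := by rw [← hα, hs]
          have h3 := G.id_comp α
          rw [h2] at h3
          rw [h3] at hc
          exact hν (hc ▸ h2)
        rw [star_single_not G σ hT h1, (hT v ν).2 (by rw [hs]; exact fun hh => hν hh.symm)]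
    · have h : G.s v = G.r v := by rw [hs, hr]
      rw [mul_eq G σ hT h]
      have h1 : G.comp v v = v := by have h2 := G.comp_id v; rwa [hs] at h2
      have h2 : σ.c v v = 1 := by have h3 := σ.right_id v; rwa [hs] at h3
      rw [h1, h2, one_smul]
  · -- orthogonal vertices
    intro v w hv hw hvw
    apply ext_of_single G
    intro τ
    rw [ContinuousLinearMap.mul_apply, vertex_single G σ hT hw τ,
      ContinuousLinearMap.zero_apply]
    by_cases hτ : G.r τ = w
    · rw [if_pos hτ, vertex_single G σ hT hv τ,
        if_neg (fun hh : G.r τ = v => hvw (hh.symm.trans hτ))]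
    · rw [if_neg hτ, map_zero]
  · -- composition
    intro μ ν h
    exact mul_eq G σ hT h
  · -- star T l * T l = T (s l)
    intro l
    apply ext_of_single G
    intro ν
    have hsv : G.IsVertex (G.s l) := G.d_s l
    rw [ContinuousLinearMap.mul_apply]
    by_cases h : G.s l = G.r ν
    · rw [(hT l ν).1 h, map_smul, star_single_comp G σ hT h, smul_smul]
      have h1 : σ.c l ν * (starRingEnd ℂ) (σ.c l ν) = 1 := by
        rw [mul_comm]; exact conj_mul_c G σ h
      rw [h1, one_smul, vertex_single G σ hT hsv ν, if_pos h.symm]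
    · rw [(hT l ν).2 h, map_zero, vertex_single G σ hT hsv ν,
        if_neg (fun hh => h hh.symm)]
  · -- MCE relation
    intro μ ν F hF
    apply ext_of_single G
    intro τ
    rw [ContinuousLinearMap.mul_apply, ContinuousLinearMap.sum_apply]
    have hterm : ∀ l ∈ F, (T l * star (T l)) (lp.single 2 τ 1)
        = if ∃ η, G.s l = G.r η ∧ G.comp l η = τ then lp.single 2 τ 1 else 0 :=
      fun l _ => TT_single G σ hT l τ
    rw [TT_single G σ hT ν τ, Finset.sum_congr rfl hterm]
    by_cases hν' : ∃ β, G.s ν = G.r β ∧ G.comp ν β = τ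
    · rw [if_pos hν']
      by_cases hμ' : ∃ α, G.s μ = G.r α ∧ G.comp μ α = τ
      · rw [TT_single G σ hT μ τ, if_pos hμ']
        obtain ⟨α, hα, hcα⟩ := hμ'
        obtain ⟨β, hβ, hcβ⟩ := hν'
        obtain ⟨l₀, η₀, hl₀, hsη₀, hcη₀⟩ := exists_mce G hα hcα hβ hcβ
        have hl₀F : l₀ ∈ F := by
          rw [← Finset.mem_coe, hF]; exact hl₀
        symm
        rw [Finset.sum_eq_single_of_mem l₀ hl₀F ?_, if_pos ⟨η₀, hsη₀, hcη₀⟩]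
        intro b hb hbne
        rw [if_neg ?_]
        rintro ⟨η, hsη, hcη⟩
        have hbM : b ∈ G.MCE μ ν := by rw [← hF]; exact Finset.mem_coe.mpr hb
        exact hbne (factor_unique_of_deg G (hbM.1.trans hl₀.1.symm) hsη hcη hsη₀ hcη₀)
      · rw [TT_single G σ hT μ τ, if_neg hμ']
        symm
        apply Finset.sum_eq_zero
        intro l hl
        rw [if_neg ?_]
        rintro ⟨η, h1, h2⟩
        have hlM : l ∈ G.MCE μ ν := by rw [← hF]; exact Finset.mem_coe.mpr hl
        exact hμ' (mce_sub G hlM h1 h2).1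
    · rw [if_neg hν', map_zero]
      symm
      apply Finset.sum_eq_zero
      intro l hl
      rw [if_neg ?_]
      rintro ⟨η, h1, h2⟩
      have hlM : l ∈ G.MCE μ ν := by rw [← hF]; exact Finset.mem_coe.mpr hl
      exact hν' (mce_sub G hlM h1 h2).2

end WithT2
end Stmt5Aux
open scoped Classical in
theorem stmt5 {k : ℕ} (G : KGraph k) (hFA : G.FinitelyAligned) (σ : G.Cocycle) :
    (∃! T : G.Path → (lp (fun _ : G.Path => ℂ) 2 →L[ℂ] lp (fun _ : G.Path => ℂ) 2),
      ∀ μ ν : G.Path,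
        (G.s μ = G.r ν → T μ (lp.single 2 ν 1) = σ.c μ ν • lp.single 2 (G.comp μ ν) 1) ∧
        (G.s μ ≠ G.r ν → T μ (lp.single 2 ν 1) = 0)) ∧
    (∀ T : G.Path → (lp (fun _ : G.Path => ℂ) 2 →L[ℂ] lp (fun _ : G.Path => ℂ) 2),
      (∀ μ ν : G.Path,
        (G.s μ = G.r ν → T μ (lp.single 2 ν 1) = σ.c μ ν • lp.single 2 (G.comp μ ν) 1) ∧
        (G.s μ ≠ G.r ν → T μ (lp.single 2 ν 1) = 0)) →
      G.IsTCK σ T) := by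
  constructor
  · refine ⟨Stmt5Aux.Top G σ,
      fun μ ν => ⟨fun h => Stmt5Aux.Top_single_comp G σ h, fun h => Stmt5Aux.Top_single_not G σ h⟩,
      ?_⟩
    intro T' hT'
    funext μ
    apply Stmt5Aux.ext_of_single G
    intro ν
    by_cases h : G.s μ = G.r ν
    · rw [(hT' μ ν).1 h, Stmt5Aux.Top_single_comp G σ h]
    · rw [(hT' μ ν).2 h, Stmt5Aux.Top_single_not G σ h]
  · intro T hT
    exact Stmt5Aux.isTCK G σ hT
end

section
/- Let A and B be C*-algebras, let Φ : A → A be a faithful conditional expectation, and let π : A → B be a *-homomorphism. Suppose there is a linear map Ψ : B → B such that Ψ ∘ π = π ∘ Φ. Then π is injective if and only if the restriction of π to the range Φ(A) is injective. -/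
open scoped BigOperators

/-- a homomorphism intertwining a faithful conditional expectation is
injective iff it is injective on the range of the expectation. -/
theorem stmt6 {A B : Type*}
    [NonUnitalNormedRing A] [StarRing A] [CStarRing A] [NormedSpace ℂ A]
    [IsScalarTower ℂ A A] [SMulCommClass ℂ A A] [StarModule ℂ A] [CompleteSpace A]
    [NonUnitalNormedRing B] [StarRing B] [CStarRing B] [NormedSpace ℂ B]
    [IsScalarTower ℂ B B] [SMulCommClass ℂ B B] [StarModule ℂ B] [CompleteSpace B]
    (Φ : A →L[ℂ] A)
    (hidem : ∀ a : A, Φ (Φ a) = Φ a)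
    (hrange_closed : IsClosed (Set.range Φ))
    (hrange_mul : ∀ x ∈ Set.range Φ, ∀ y ∈ Set.range Φ, x * y ∈ Set.range Φ)
    (hrange_star : ∀ x ∈ Set.range Φ, star x ∈ Set.range Φ)
    (hfaithful : ∀ a : A, Φ (star a * a) = 0 → a = 0)
    (π : A →⋆ₙₐ[ℂ] B) (Ψ : B →ₗ[ℂ] B)
    (hcomm : ∀ a : A, Ψ (π a) = π (Φ a)) :
    Function.Injective π ↔ Set.InjOn π (Set.range Φ) := by
  constructor
  · exact fun h => h.injOn
  · intro h
    have hker : ∀ a : A, π a = 0 → a = 0 := by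
      intro a ha
      apply hfaithful
      have h0 : π (Φ (star a * a)) = 0 := by
        rw [← hcomm, map_mul, map_star, ha, mul_zero, map_zero]
      have h1 : π (Φ (star a * a)) = π 0 := by rw [h0, map_zero]
      exact h ⟨star a * a, rfl⟩ ⟨0, map_zero Φ⟩ (by simpa using h1)
    intro a b hab
    have h2 : π (a - b) = 0 := by rw [map_sub, hab, sub_self]
    exact sub_eq_zero.mp (hker _ h2)
end

section
/- Let Λ be a finitely aligned k-graph, let c be a T-valued 2-cocycle on Λ, and let t be a Cuntz–Krieger (Λ,c)-family in a C*-algebra. Let (μ,ν) be a generalised cycle in Λ with an entrance τ ∈ s(ν)Λ (so MCE(μ,ντ) = ∅), and suppose t_{s(τ)} ≠ 0. Then V := t_μ t_ν* satisfies VV* = q_μ and V*V = q_ν; moreover q_{ντ} ≠ 0, q_{ντ} ≤ q_ν, and q_μ ≤ q_ν − q_{ντ}. Consequently q_μ is an infinite projection: the element W := t_μ t_ν* q_μ satisfies W*W = q_μ, WW* ≤ q_μ and WW* ≠ q_μ. -/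
open scoped BigOperators

/-! ### Auxiliary lemmas -/

namespace KGraph

variable {k : ℕ} (G : KGraph k)

lemma comp_vertex_right {a p : G.Path} (h : G.s a = G.r p) (hp : G.d p = 0) :
    G.comp a p = a := by
  have hrp : G.r p = p := G.r_of_vertex p hp
  have hpa : p = G.s a := by rw [h, hrp]
  rw [hpa, G.comp_id]

lemma exists_split (x : G.Path) (m : Fin k → ℕ) (h : m ≤ G.d x) :
    ∃ a b : G.Path, G.d a = m ∧ G.d b = G.d x - m ∧ G.s a = G.r b ∧ G.comp a b = x := by
  obtain ⟨p, hp, -⟩ := G.factor x m (G.d x - m) (by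
    funext i; exact (Nat.add_sub_cancel' (h i)).symm)
  exact ⟨p.1, p.2, hp.1, hp.2.1, hp.2.2.1, hp.2.2.2⟩

lemma comp_uniq {a b a' b' : G.Path} (hab : G.s a = G.r b) (hab' : G.s a' = G.r b')
    (hd : G.d a = G.d a') (h : G.comp a b = G.comp a' b') : a = a' ∧ b = b' := by
  have hdb : G.d b = G.d b' := by
    have h1 := G.d_comp a b hab
    have h2 := G.d_comp a' b' hab'
    rw [h, h2, ← hd] at h1
    funext i
    exact (Nat.add_left_cancel (congrFun h1 i)).symm
  obtain ⟨p, -, hu⟩ := G.factor (G.comp a b) (G.d a) (G.d b) (G.d_comp a b hab)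
  have e1 := hu (a, b) ⟨rfl, rfl, hab, rfl⟩
  have e2 := hu (a', b') ⟨hd.symm, hdb.symm, hab', h.symm⟩
  have e3 := e1.trans e2.symm
  exact ⟨congrArg Prod.fst e3, congrArg Prod.snd e3⟩

lemma mce_comm (a b : G.Path) : G.MCE a b = G.MCE b a := by
  ext x
  simp only [MCE, Set.mem_setOf_eq]
  rw [sup_comm]
  tauto

lemma mce_empty_of_same_deg {a b : G.Path} (hd : G.d a = G.d b) (hne : a ≠ b) :
    G.MCE a b = ∅ := by
  ext x
  simp only [MCE, Set.mem_setOf_eq, Set.mem_empty_iff_false, iff_false]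
  rintro ⟨hdx, ⟨p, hp1, hp2⟩, ⟨q, hq1, hq2⟩⟩
  have hsup : G.d a ⊔ G.d b = G.d a := by rw [hd]; exact sup_idem _
  have hdp : G.d p = 0 := by
    have hc := G.d_comp a p hp1
    rw [hp2, hdx, hsup] at hc
    funext i
    have h2 := congrFun hc i
    simp only [Pi.add_apply] at h2
    simp only [Pi.zero_apply]
    omega
  have hdq : G.d q = 0 := by
    have hc := G.d_comp b q hq1
    rw [hq2, hdx, hsup, hd] at hc
    funext i
    have h2 := congrFun hc i
    simp only [Pi.add_apply] at h2
    simp only [Pi.zero_apply]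
    omega
  exact hne (by rw [← G.comp_vertex_right hp1 hdp, hp2, ← hq2, G.comp_vertex_right hq1 hdq])

/-- The key combinatorial step: if `μl` has a common extension with `ν`, then some
`α ∈ Ext(μ;{ν})` has a common extension with `l`. -/
lemma gc_ext {μ ν l : G.Path} (hl : G.r l = G.s μ)
    (hne : (G.MCE (G.comp μ l) ν).Nonempty) :
    ∃ α, (G.s μ = G.r α ∧ G.comp μ α ∈ G.MCE μ ν) ∧ (G.MCE l α).Nonempty := by
  obtain ⟨ξ, hdξ, ⟨β, hβ1, hβ2⟩, ⟨γ, hγ1, hγ2⟩⟩ := hne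
  have hμl : G.s μ = G.r l := hl.symm
  have hslβ : G.s l = G.r β := by rw [← G.s_comp μ l hμl]; exact hβ1
  set η := G.comp l β with hη
  have hrη : G.r η = G.s μ := by rw [hη, G.r_comp l β hslβ, hl]
  have hμη : G.s μ = G.r η := hrη.symm
  have hξη : G.comp μ η = ξ := by rw [hη, ← G.comp_assoc μ l β hμl hslβ, hβ2]
  have hdη : G.d η = G.d l + G.d β := G.d_comp l β hslβ
  have hdξ2 : G.d ξ = G.d μ + G.d η := by rw [← hξη]; exact G.d_comp μ η hμη
  have hdcompμl : G.d (G.comp μ l) = G.d μ + G.d l := G.d_comp μ l hμl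
  have hmle : (G.d μ ⊔ G.d ν) ≤ G.d ξ := by
    intro i
    have h1 := congrFun hdξ i
    have h2 := congrFun hdcompμl i
    simp only [Pi.sup_apply, Pi.add_apply] at h1 h2 ⊢
    omega
  have hnle : ((G.d μ ⊔ G.d ν) - G.d μ) ≤ G.d η := by
    intro i
    have h1 := hmle i
    have h3 := congrFun hdξ2 i
    simp only [Pi.sup_apply, Pi.sub_apply, Pi.add_apply] at h1 h3 ⊢
    omega
  obtain ⟨α, η₂, hdα, hdη₂, hαη₂, hα_eq⟩ := G.exists_split η _ hnle
  have hrα : G.s μ = G.r α := by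
    rw [← hα_eq] at hμη
    rwa [G.r_comp α η₂ hαη₂] at hμη
  have hdμα : G.d (G.comp μ α) = G.d μ ⊔ G.d ν := by
    rw [G.d_comp μ α hrα, hdα]
    funext i
    simp only [Pi.add_apply, Pi.sub_apply, Pi.sup_apply]
    omega
  have hcompμα : G.comp (G.comp μ α) η₂ = ξ := by
    rw [G.comp_assoc μ α η₂ hrα hαη₂, hα_eq, hξη]
  have hsμα : G.s (G.comp μ α) = G.r η₂ := by rw [G.s_comp μ α hrα]; exact hαη₂
  have hdξν : G.d ξ = G.d ν + G.d γ := by rw [← hγ2]; exact G.d_comp ν γ hγ1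
  have hdγ : ((G.d μ ⊔ G.d ν) - G.d ν) ≤ G.d γ := by
    intro i
    have h1 := hmle i
    have h4 := congrFun hdξν i
    simp only [Pi.sup_apply, Pi.sub_apply, Pi.add_apply] at h1 h4 ⊢
    omega
  obtain ⟨γ₁, γ₂, hdγ₁, -, hγ₁₂, hγ₁eq⟩ := G.exists_split γ _ hdγ
  have hsνγ₁ : G.s ν = G.r γ₁ := by rw [hγ1, ← hγ₁eq, G.r_comp γ₁ γ₂ hγ₁₂]
  have hdνγ₁ : G.d (G.comp ν γ₁) = G.d μ ⊔ G.d ν := by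
    rw [G.d_comp ν γ₁ hsνγ₁, hdγ₁]
    funext i
    simp only [Pi.add_apply, Pi.sub_apply, Pi.sup_apply]
    omega
  have hξνγ : G.comp (G.comp ν γ₁) γ₂ = ξ := by
    rw [G.comp_assoc ν γ₁ γ₂ hsνγ₁ hγ₁₂, hγ₁eq, hγ2]
  have hsνγ₁' : G.s (G.comp ν γ₁) = G.r γ₂ := by rw [G.s_comp ν γ₁ hsνγ₁]; exact hγ₁₂
  have huniq := G.comp_uniq hsμα hsνγ₁' (by rw [hdμα, hdνγ₁]) (hcompμα.trans hξνγ.symm)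
  have hMCE : G.comp μ α ∈ G.MCE μ ν :=
    ⟨hdμα, ⟨α, hrα, rfl⟩, ⟨γ₁, hsνγ₁, huniq.1.symm⟩⟩
  refine ⟨α, ⟨hrα, hMCE⟩, ?_⟩
  have hple : (G.d l ⊔ G.d α) ≤ G.d η := by
    intro i
    have h1 := congrFun hdη i
    have h2 := hnle i
    have h3 := congrFun hdα i
    simp only [Pi.sup_apply, Pi.add_apply, Pi.sub_apply] at h1 h2 h3 ⊢
    omega
  obtain ⟨ζ, ζ', hdζ, -, hζζ', hζeq⟩ := G.exists_split η _ hple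
  have hβle : ((G.d l ⊔ G.d α) - G.d l) ≤ G.d β := by
    intro i
    have h1 := congrFun hdη i
    have h2 := hple i
    simp only [Pi.sup_apply, Pi.add_apply, Pi.sub_apply] at h1 h2 ⊢
    omega
  obtain ⟨β₁, β₂, hdβ₁, -, hβ₁₂, hβ₁eq⟩ := G.exists_split β _ hβle
  have hslβ₁ : G.s l = G.r β₁ := by rw [hslβ, ← hβ₁eq, G.r_comp β₁ β₂ hβ₁₂]
  have hd_lβ₁ : G.d (G.comp l β₁) = G.d l ⊔ G.d α := by
    rw [G.d_comp l β₁ hslβ₁, hdβ₁]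
    funext i
    simp only [Pi.add_apply, Pi.sub_apply, Pi.sup_apply]
    omega
  have hη_lβ : G.comp (G.comp l β₁) β₂ = η := by
    rw [G.comp_assoc l β₁ β₂ hslβ₁ hβ₁₂, hβ₁eq]
  have hsl_β₁ : G.s (G.comp l β₁) = G.r β₂ := by rw [G.s_comp l β₁ hslβ₁]; exact hβ₁₂
  have hζ_l := G.comp_uniq hζζ' hsl_β₁ (by rw [hdζ, hd_lβ₁]) (hζeq.trans hη_lβ.symm)
  have hηαη₂ : G.d η = G.d α + G.d η₂ := by rw [← hα_eq]; exact G.d_comp α η₂ hαη₂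
  have hδle : ((G.d l ⊔ G.d α) - G.d α) ≤ G.d η₂ := by
    intro i
    have h1 := congrFun hηαη₂ i
    have h2 := hple i
    simp only [Pi.sup_apply, Pi.add_apply, Pi.sub_apply] at h1 h2 ⊢
    omega
  obtain ⟨δ₁, δ₂, hdδ₁, -, hδ₁₂, hδ₁eq⟩ := G.exists_split η₂ _ hδle
  have hsαδ₁ : G.s α = G.r δ₁ := by rw [hαη₂, ← hδ₁eq, G.r_comp δ₁ δ₂ hδ₁₂]
  have hd_αδ₁ : G.d (G.comp α δ₁) = G.d l ⊔ G.d α := by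
    rw [G.d_comp α δ₁ hsαδ₁, hdδ₁]
    funext i
    simp only [Pi.add_apply, Pi.sub_apply, Pi.sup_apply]
    omega
  have hη_αδ : G.comp (G.comp α δ₁) δ₂ = η := by
    rw [G.comp_assoc α δ₁ δ₂ hsαδ₁ hδ₁₂, hδ₁eq, hα_eq]
  have hsαδ₁' : G.s (G.comp α δ₁) = G.r δ₂ := by rw [G.s_comp α δ₁ hsαδ₁]; exact hδ₁₂
  have hζ_α := G.comp_uniq hζζ' hsαδ₁' (by rw [hdζ, hd_αδ₁]) (hζeq.trans hη_αδ.symm)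
  exact ⟨ζ, hdζ, ⟨β₁, hslβ₁, hζ_l.1.symm⟩, ⟨δ₁, hsαδ₁, hζ_α.1.symm⟩⟩

section CStarAux

variable {k : ℕ} {G : KGraph k} {σ : G.Cocycle}
  {A : Type*} [NonUnitalNormedRing A] [StarRing A] [CStarRing A]
  [NormedSpace ℂ A] [IsScalarTower ℂ A A] [SMulCommClass ℂ A A]
  [StarModule ℂ A] [CompleteSpace A]
  {t : G.Path → A}

lemma tck_q_star (l : G.Path) : star (t l * star (t l)) = t l * star (t l) := by
  rw [star_mul, star_star]

lemma tck_t_mul_ts (hT : G.IsTCK σ t) (l : G.Path) : t l * t (G.s l) = t l := by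
  have hv : G.s l = G.r (G.s l) := (G.r_of_vertex _ (G.d_s l)).symm
  rw [hT.2.2.1 l (G.s l) hv, G.comp_id, σ.right_id, one_smul]

lemma tck_tr_mul_t (hT : G.IsTCK σ t) (l : G.Path) : t (G.r l) * t l = t l := by
  have hv : G.s (G.r l) = G.r l := G.s_of_vertex _ (G.d_r l)
  rw [hT.2.2.1 (G.r l) l hv, G.id_comp, σ.left_id, one_smul]

lemma tck_ts_mul_star (hT : G.IsTCK σ t) (l : G.Path) :
    t (G.s l) * star (t l) = star (t l) := by
  have := congrArg star (tck_t_mul_ts hT l)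
  rwa [star_mul, (hT.1 _ (G.d_s l)).1] at this

lemma tck_star_mul_tr (hT : G.IsTCK σ t) (l : G.Path) :
    star (t l) * t (G.r l) = star (t l) := by
  have := congrArg star (tck_tr_mul_t hT l)
  rwa [star_mul, (hT.1 _ (G.d_r l)).1] at this

lemma tck_q_mul_t (hT : G.IsTCK σ t) (l : G.Path) :
    (t l * star (t l)) * t l = t l := by
  rw [mul_assoc, hT.2.2.2.1 l, tck_t_mul_ts hT l]

lemma tck_q_idem (hT : G.IsTCK σ t) (l : G.Path) :
    (t l * star (t l)) * (t l * star (t l)) = t l * star (t l) := by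
  rw [← mul_assoc, tck_q_mul_t hT l]

lemma tck_tr_mul_q (hT : G.IsTCK σ t) (l : G.Path) :
    t (G.r l) * (t l * star (t l)) = t l * star (t l) := by
  rw [← mul_assoc, tck_tr_mul_t hT l]

lemma tck_q_mul_tr (hT : G.IsTCK σ t) (l : G.Path) :
    (t l * star (t l)) * t (G.r l) = t l * star (t l) := by
  rw [mul_assoc, tck_star_mul_tr hT l]

lemma tck_tv_eq_q (hT : G.IsTCK σ t) (v : G.Path) (hv : G.IsVertex v) :
    t v * star (t v) = t v := by
  rw [(hT.1 v hv).1, (hT.1 v hv).2]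

lemma tck_q_comp (hT : G.IsTCK σ t) {a b : G.Path} (h : G.s a = G.r b) :
    t (G.comp a b) * star (t (G.comp a b)) = t a * (t b * star (t b)) * star (t a) := by
  have h3 := hT.2.2.1 a b h
  have hc : σ.c a b * star (σ.c a b) = 1 := by
    have hn := σ.norm_one a b h
    rw [Complex.star_def, Complex.mul_conj]
    norm_cast
    rw [Complex.normSq_eq_norm_sq, hn, one_pow]
  have key : (σ.c a b • t (G.comp a b)) * star (σ.c a b • t (G.comp a b))
      = t (G.comp a b) * star (t (G.comp a b)) := by
    rw [star_smul, smul_mul_assoc, mul_smul_comm, smul_smul, hc, one_smul]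
  rw [← key, ← h3, star_mul]
  simp [mul_assoc]

lemma tck_absorb_left (hT : G.IsTCK σ t) {a b : G.Path} (h : G.s a = G.r b) :
    (t a * star (t a)) * (t (G.comp a b) * star (t (G.comp a b)))
      = t (G.comp a b) * star (t (G.comp a b)) := by
  rw [tck_q_comp hT h]
  calc (t a * star (t a)) * (t a * (t b * star (t b)) * star (t a))
      = ((t a * star (t a)) * t a) * ((t b * star (t b)) * star (t a)) := by
        simp only [mul_assoc]
    _ = t a * ((t b * star (t b)) * star (t a)) := by rw [tck_q_mul_t hT]
    _ = t a * (t b * star (t b)) * star (t a) := by simp only [mul_assoc]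

lemma tck_absorb_right (hT : G.IsTCK σ t) {a b : G.Path} (h : G.s a = G.r b) :
    (t (G.comp a b) * star (t (G.comp a b))) * (t a * star (t a))
      = t (G.comp a b) * star (t (G.comp a b)) := by
  have := congrArg star (tck_absorb_left hT h)
  rwa [star_mul, tck_q_star, tck_q_star] at this

lemma tck_orth (hT : G.IsTCK σ t) {a b : G.Path} (hd : G.d a = G.d b) (hne : a ≠ b) :
    (t a * star (t a)) * (t b * star (t b)) = 0 := by
  have h5 := hT.2.2.2.2 a b ∅ (by
    rw [G.mce_empty_of_same_deg hd hne]; simp)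
  simpa using h5

lemma unitization_prod_formula (e : A) (q : G.Path → A) (he : e * e = e) :
    ∀ (F : Finset G.Path),
    (∀ l ∈ F, e * q l = q l) → (∀ l ∈ F, q l * e = q l) →
    (∀ l ∈ F, ∀ l' ∈ F, l ≠ l' → q l * q l' = 0) →
    ∀ (h : (F : Set G.Path).Pairwise
      (Function.onFun Commute fun l => ((e - q l : A) : Unitization ℂ A))),
    ((e : A) : Unitization ℂ A) *
        F.noncommProd (fun l => ((e - q l : A) : Unitization ℂ A)) h
      = (((e - ∑ l ∈ F, q l : A) : Unitization ℂ A)) := by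
  intro F
  classical
  induction F using Finset.induction_on with
  | empty =>
    intro _ _ _ h
    rw [Finset.noncommProd_empty, mul_one]
    simp
  | @insert a F ha ih =>
    intro hle hre horth h
    have ihP := ih (fun l hl => hle l (Finset.mem_insert_of_mem hl))
      (fun l hl => hre l (Finset.mem_insert_of_mem hl))
      (fun l hl l' hl' => horth l (Finset.mem_insert_of_mem hl) l' (Finset.mem_insert_of_mem hl'))
      (h.mono (by exact_mod_cast Finset.subset_insert a F))
    have hea : e * (e - q a) = e - q a := by
      rw [mul_sub, he, hle a (Finset.mem_insert_self a F)]
    have hqa : q a * (e - ∑ l ∈ F, q l) = q a := by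
      rw [mul_sub, hre a (Finset.mem_insert_self a F), Finset.mul_sum]
      have hz : ∑ l ∈ F, q a * q l = 0 :=
        Finset.sum_eq_zero (fun l hl =>
          horth a (Finset.mem_insert_self a F) l (Finset.mem_insert_of_mem hl)
            (fun hh => ha (hh ▸ hl)))
      rw [hz, sub_zero]
    rw [Finset.noncommProd_insert_of_notMem _ _ _ _ ha]
    have step : ((q a : A) : Unitization ℂ A) *
        F.noncommProd (fun l => ((e - q l : A) : Unitization ℂ A))
          (h.mono (by exact_mod_cast Finset.subset_insert a F)) = ((q a : A) : Unitization ℂ A) := by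
      have haux : ((q a : A) : Unitization ℂ A) *
          (((e : A) : Unitization ℂ A) *
            F.noncommProd (fun l => ((e - q l : A) : Unitization ℂ A))
              (h.mono (by exact_mod_cast Finset.subset_insert a F)))
          = ((q a : A) : Unitization ℂ A) := by
        rw [ihP, ← Unitization.inr_mul, hqa]
      rwa [← mul_assoc, ← Unitization.inr_mul, hre a (Finset.mem_insert_self a F)] at haux
    calc ((e : A) : Unitization ℂ A) *
          (((e - q a : A) : Unitization ℂ A) *
            F.noncommProd (fun l => ((e - q l : A) : Unitization ℂ A)) _)
        = ((e * (e - q a) : A) : Unitization ℂ A) *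
            F.noncommProd (fun l => ((e - q l : A) : Unitization ℂ A)) _ := by
          rw [← mul_assoc, ← Unitization.inr_mul]
      _ = ((e - q a : A) : Unitization ℂ A) *
            F.noncommProd (fun l => ((e - q l : A) : Unitization ℂ A)) _ := by rw [hea]
      _ = ((e : A) : Unitization ℂ A) *
            F.noncommProd (fun l => ((e - q l : A) : Unitization ℂ A)) _
          - ((q a : A) : Unitization ℂ A) *
            F.noncommProd (fun l => ((e - q l : A) : Unitization ℂ A)) _ := by
          rw [Unitization.inr_sub, sub_mul]
      _ = ((e - ∑ l ∈ F, q l : A) : Unitization ℂ A) - ((q a : A) : Unitization ℂ A) := by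
          rw [ihP, step]
      _ = ((e - ∑ l ∈ insert a F, q l : A) : Unitization ℂ A) := by
          rw [← Unitization.inr_sub]
          congr 1
          rw [Finset.sum_insert ha]
          abel

lemma tck_delta_eq (hT : G.IsTCK σ t) (v : G.Path) (hv : G.IsVertex v) (F : Finset G.Path)
    (hrv : ∀ l ∈ F, G.r l = v)
    (horth : ∀ l ∈ F, ∀ l' ∈ F, l ≠ l' → (t l * star (t l)) * (t l' * star (t l')) = 0) :
    G.Delta t v F = t v - ∑ l ∈ F, t l * star (t l) := by
  have he : t v * star (t v) = t v := tck_tv_eq_q hT v hv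
  have hee : (t v * star (t v)) * (t v * star (t v)) = t v * star (t v) := tck_q_idem hT v
  have hle : ∀ l ∈ F, (t v * star (t v)) * (t l * star (t l)) = t l * star (t l) := by
    intro l hl
    rw [he, ← hrv l hl]
    exact tck_tr_mul_q hT l
  have hre : ∀ l ∈ F, (t l * star (t l)) * (t v * star (t v)) = t l * star (t l) := by
    intro l hl
    rw [he, ← hrv l hl]
    exact tck_q_mul_tr hT l
  have hcomm : (F : Set G.Path).Pairwise
      (Function.onFun Commute fun l => ((t v * star (t v) - t l * star (t l) : A) : Unitization ℂ A)) := by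
    intro l hl l' hl' hne
    have hlF : l ∈ F := Finset.mem_coe.mp hl
    have hlF' : l' ∈ F := Finset.mem_coe.mp hl'
    have key : (t v * star (t v) - t l * star (t l)) * (t v * star (t v) - t l' * star (t l'))
        = (t v * star (t v) - t l' * star (t l')) * (t v * star (t v) - t l * star (t l)) := by
      simp only [mul_sub, sub_mul, hee, hle l hlF, hle l' hlF', hre l hlF, hre l' hlF',
        horth l hlF l' hlF' hne, horth l' hlF' l hlF (Ne.symm hne), sub_zero]
      abel
    show _ * _ = _ * _
    rw [← Unitization.inr_mul, ← Unitization.inr_mul, key]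
  rw [KGraph.Delta, dif_pos hcomm,
    unitization_prod_formula (t v * star (t v)) (fun l => t l * star (t l)) hee F hle hre
      (fun l hl l' hl' hne => horth l hl l' hl' hne) hcomm,
    Unitization.snd_inr, he]

/-- A generalised cycle `(μ, ν)` forces `q_ν q_μ = q_μ` for any CK family. -/
lemma gc_absorb {k : ℕ} (G : KGraph k) (hFA : G.FinitelyAligned) (σ : G.Cocycle)
    {A : Type*} [NonUnitalNormedRing A] [StarRing A] [CStarRing A]
    [NormedSpace ℂ A] [IsScalarTower ℂ A A] [SMulCommClass ℂ A A]
    [StarModule ℂ A] [CompleteSpace A]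
    (t : G.Path → A) (ht : G.IsCK σ t) (μ ν : G.Path)
    (hgc : ∀ τ' : G.Path, G.r τ' = G.s μ → (G.MCE (G.comp μ τ') ν).Nonempty) :
    (t ν * star (t ν)) * (t μ * star (t μ)) = t μ * star (t μ) := by
  classical
  obtain ⟨hT, hCK⟩ := ht
  by_cases hcase : ∃ β, G.s ν = G.r β ∧ G.comp ν β = μ
  · obtain ⟨β, hβ1, hβ2⟩ := hcase
    rw [← hβ2]
    exact tck_absorb_left hT hβ1
  · set Eset : Set G.Path := {α | G.s μ = G.r α ∧ G.comp μ α ∈ G.MCE μ ν} with hEset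
    have hinj : ∀ α ∈ Eset, ∀ α' ∈ Eset, G.comp μ α = G.comp μ α' → α = α' :=
      fun α hα α' hα' hc => (G.comp_uniq hα.1 hα'.1 rfl hc).2
    have hEfin : Eset.Finite := by
      apply Set.Finite.of_finite_image (f := G.comp μ)
      · exact (hFA μ ν).subset (by rintro x ⟨α, hα, rfl⟩; exact hα.2)
      · exact fun α hα α' hα' hc => hinj α hα α' hα' hc
    set F : Finset G.Path := hEfin.toFinset with hF
    have hmemF : ∀ α, α ∈ F ↔ α ∈ Eset := fun α => Set.Finite.mem_toFinset hEfin
    have hdeg : ∀ α ∈ F, G.d α = (G.d μ ⊔ G.d ν) - G.d μ := by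
      intro α hα
      have h1 := ((hmemF α).mp hα).2.1
      have h2 := G.d_comp μ α ((hmemF α).mp hα).1
      rw [h1] at h2
      funext i
      have h3 := congrFun h2 i
      simp only [Pi.sup_apply, Pi.add_apply, Pi.sub_apply] at h3 ⊢
      omega
    have horthF : ∀ α ∈ F, ∀ α' ∈ F, α ≠ α' →
        (t α * star (t α)) * (t α' * star (t α')) = 0 := by
      intro α hα α' hα' hne
      exact tck_orth hT ((hdeg α hα).trans (hdeg α' hα').symm) hne
    have hrF : ∀ α ∈ F, G.r α = G.s μ := fun α hα => ((hmemF α).mp hα).1.symm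
    have hvsμ : G.IsVertex (G.s μ) := G.d_s μ
    have hFE : G.IsFE Eset := by
      refine ⟨hEfin, Set.subset_univ _, ?_, G.s μ, hvsμ, fun α hα => hα.1.symm, ?_⟩
      · intro α hα hvα
        have hα2 := hα.2
        rw [G.comp_vertex_right hα.1 hvα] at hα2
        exact hcase hα2.2.2
      · intro l _ hl
        obtain ⟨α, hα, ⟨ζ, hζ⟩⟩ := G.gc_ext hl (hgc l hl)
        exact ⟨α, hα, ⟨ζ, hζ, trivial⟩⟩
    have hΔ := hCK F (G.s μ) (by
        simp only [Set.mem_setOf_eq, hF, Set.Finite.coe_toFinset]; exact hFE)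
      hvsμ hrF
    rw [tck_delta_eq hT (G.s μ) hvsμ F hrF horthF] at hΔ
    have hsum : t (G.s μ) = ∑ α ∈ F, t α * star (t α) := by
      have := sub_eq_zero.mp hΔ
      exact this
    have hinjF : ∀ α ∈ F, ∀ α' ∈ F, G.comp μ α = G.comp μ α' → α = α' :=
      fun α hα α' hα' hc => hinj α ((hmemF α).mp hα) α' ((hmemF α').mp hα') hc
    have hFimg : ((F.image (G.comp μ) : Finset G.Path) : Set G.Path) = G.MCE ν μ := by
      rw [G.mce_comm]
      ext x
      simp only [Finset.coe_image, Set.mem_image, Finset.mem_coe]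
      constructor
      · rintro ⟨α, hα, rfl⟩
        exact ((hmemF α).mp hα).2
      · intro hx
        obtain ⟨α, hα1, hα2⟩ := hx.2.1
        refine ⟨α, (hmemF α).mpr ⟨hα1, ?_⟩, hα2⟩
        rw [hα2]; exact hx
    have h5 := hT.2.2.2.2 ν μ (F.image (G.comp μ)) hFimg
    calc (t ν * star (t ν)) * (t μ * star (t μ))
        = ∑ x ∈ F.image (G.comp μ), t x * star (t x) := h5
      _ = ∑ α ∈ F, t (G.comp μ α) * star (t (G.comp μ α)) := Finset.sum_image hinjF
      _ = ∑ α ∈ F, t μ * (t α * star (t α)) * star (t μ) := by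
          exact Finset.sum_congr rfl (fun α hα => tck_q_comp hT ((hmemF α).mp hα).1)
      _ = t μ * (∑ α ∈ F, t α * star (t α)) * star (t μ) := by
          rw [Finset.mul_sum, Finset.sum_mul]
      _ = t μ * t (G.s μ) * star (t μ) := by rw [← hsum]
      _ = t μ * star (t μ) := by rw [tck_t_mul_ts hT]

end CStarAux

end KGraph

/-- a generalised cycle with an entrance gives an infinite projection. -/
theorem stmt7 {k : ℕ} (G : KGraph k) (hFA : G.FinitelyAligned) (σ : G.Cocycle)
    {A : Type*} [NonUnitalNormedRing A] [StarRing A] [CStarRing A]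
    [NormedSpace ℂ A] [IsScalarTower ℂ A A] [SMulCommClass ℂ A A]
    [StarModule ℂ A] [CompleteSpace A] [PartialOrder A] [StarOrderedRing A]
    (t : G.Path → A) (ht : G.IsCK σ t)
    (μ ν τ : G.Path)
    (hr : G.r μ = G.r ν) (hs : G.s μ = G.s ν)
    (hgc : ∀ τ' : G.Path, G.r τ' = G.s μ → (G.MCE (G.comp μ τ') ν).Nonempty)
    (hτ : G.r τ = G.s ν) (hent : G.MCE μ (G.comp ν τ) = ∅)
    (hnz : t (G.s τ) ≠ 0) :
    ∀ V : A, V = t μ * star (t ν) →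
      V * star V = t μ * star (t μ) ∧
      star V * V = t ν * star (t ν) ∧
      t (G.comp ν τ) * star (t (G.comp ν τ)) ≠ 0 ∧
      t (G.comp ν τ) * star (t (G.comp ν τ)) ≤ t ν * star (t ν) ∧
      t μ * star (t μ) ≤ t ν * star (t ν) - t (G.comp ν τ) * star (t (G.comp ν τ)) ∧
      ∀ W : A, W = V * (t μ * star (t μ)) →
        star W * W = t μ * star (t μ) ∧
        W * star W ≤ t μ * star (t μ) ∧
        W * star W ≠ t μ * star (t μ) := by
  intro V hV
  have hT := ht.1
  have hrτν : G.s ν = G.r τ := hτ.symm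
  -- V V* = q_μ
  have hA : V * star V = t μ * star (t μ) := by
    rw [hV, star_mul, star_star]
    calc (t μ * star (t ν)) * (t ν * star (t μ))
        = t μ * ((star (t ν) * t ν) * star (t μ)) := by simp only [mul_assoc]
      _ = t μ * (t (G.s μ) * star (t μ)) := by rw [hT.2.2.2.1 ν, ← hs]
      _ = t μ * star (t μ) := by rw [KGraph.tck_ts_mul_star hT μ]
  -- V* V = q_ν
  have hB : star V * V = t ν * star (t ν) := by
    rw [hV, star_mul, star_star]
    calc (t ν * star (t μ)) * (t μ * star (t ν))
        = t ν * ((star (t μ) * t μ) * star (t ν)) := by simp only [mul_assoc]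
      _ = t ν * (t (G.s ν) * star (t ν)) := by rw [hT.2.2.2.1 μ, hs]
      _ = t ν * star (t ν) := by rw [KGraph.tck_ts_mul_star hT ν]
  -- t_{ντ} ≠ 0
  have hτ0 : t (G.comp ν τ) ≠ 0 := by
    intro h0
    apply hnz
    have h2 := hT.2.2.2.1 (G.comp ν τ)
    rw [h0, mul_zero, G.s_comp ν τ hrτν] at h2
    exact h2.symm
  have hC : t (G.comp ν τ) * star (t (G.comp ν τ)) ≠ 0 := by
    intro h0
    apply hτ0
    have h1 : ‖t (G.comp ν τ) * star (t (G.comp ν τ))‖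
        = ‖t (G.comp ν τ)‖ * ‖t (G.comp ν τ)‖ := CStarRing.norm_self_mul_star
    rw [h0, norm_zero] at h1
    exact norm_eq_zero.mp (mul_self_eq_zero.mp h1.symm)
  -- multiplicative relations between the three projections
  have hν_ντ := KGraph.tck_absorb_left hT hrτν
  have hντ_ν := KGraph.tck_absorb_right hT hrτν
  have hμ_ντ : (t μ * star (t μ)) * (t (G.comp ν τ) * star (t (G.comp ν τ))) = 0 := by
    have h5 := hT.2.2.2.2 μ (G.comp ν τ) ∅ (by simp [hent])
    simpa using h5
  have hντ_μ : (t (G.comp ν τ) * star (t (G.comp ν τ))) * (t μ * star (t μ)) = 0 := by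
    have := congrArg star hμ_ντ
    rwa [star_mul, KGraph.tck_q_star, KGraph.tck_q_star, star_zero] at this
  have hνμ : (t ν * star (t ν)) * (t μ * star (t μ)) = t μ * star (t μ) :=
    KGraph.gc_absorb G hFA σ t ht μ ν hgc
  have hμν : (t μ * star (t μ)) * (t ν * star (t ν)) = t μ * star (t μ) := by
    have := congrArg star hνμ
    rwa [star_mul, KGraph.tck_q_star, KGraph.tck_q_star] at this
  have hμμ := KGraph.tck_q_idem hT μ
  have hνν := KGraph.tck_q_idem hT ν
  have hττ := KGraph.tck_q_idem hT (G.comp ν τ)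
  -- q_{ντ} ≤ q_ν
  have hD : t (G.comp ν τ) * star (t (G.comp ν τ)) ≤ t ν * star (t ν) := by
    rw [← sub_nonneg]
    have hsa : star (t ν * star (t ν) - t (G.comp ν τ) * star (t (G.comp ν τ)))
        = t ν * star (t ν) - t (G.comp ν τ) * star (t (G.comp ν τ)) := by
      rw [star_sub, KGraph.tck_q_star, KGraph.tck_q_star]
    have hidem : (t ν * star (t ν) - t (G.comp ν τ) * star (t (G.comp ν τ)))
        * (t ν * star (t ν) - t (G.comp ν τ) * star (t (G.comp ν τ)))
        = t ν * star (t ν) - t (G.comp ν τ) * star (t (G.comp ν τ)) := by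
      simp only [mul_sub, sub_mul, hνν, hν_ντ, hντ_ν, hττ, sub_zero]
      abel
    calc (0:A) ≤ star (t ν * star (t ν) - t (G.comp ν τ) * star (t (G.comp ν τ)))
          * (t ν * star (t ν) - t (G.comp ν τ) * star (t (G.comp ν τ))) :=
            star_mul_self_nonneg _
      _ = _ := by rw [hsa, hidem]
  -- q_μ ≤ q_ν - q_{ντ}
  have hE : t μ * star (t μ) ≤ t ν * star (t ν) - t (G.comp ν τ) * star (t (G.comp ν τ)) := by
    rw [← sub_nonneg]
    have hsa : star (t ν * star (t ν) - t (G.comp ν τ) * star (t (G.comp ν τ))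
          - t μ * star (t μ))
        = t ν * star (t ν) - t (G.comp ν τ) * star (t (G.comp ν τ)) - t μ * star (t μ) := by
      rw [star_sub, star_sub, KGraph.tck_q_star, KGraph.tck_q_star, KGraph.tck_q_star]
    have hidem : (t ν * star (t ν) - t (G.comp ν τ) * star (t (G.comp ν τ)) - t μ * star (t μ))
        * (t ν * star (t ν) - t (G.comp ν τ) * star (t (G.comp ν τ)) - t μ * star (t μ))
        = t ν * star (t ν) - t (G.comp ν τ) * star (t (G.comp ν τ)) - t μ * star (t μ) := by
      simp only [mul_sub, sub_mul, hνν, hν_ντ, hντ_ν, hττ, hμμ, hνμ, hμν, hμ_ντ, hντ_μ,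
        sub_zero, zero_sub]
      abel
    calc (0:A) ≤ star (t ν * star (t ν) - t (G.comp ν τ) * star (t (G.comp ν τ))
            - t μ * star (t μ))
          * (t ν * star (t ν) - t (G.comp ν τ) * star (t (G.comp ν τ)) - t μ * star (t μ)) :=
            star_mul_self_nonneg _
      _ = _ := by rw [hsa, hidem]
  refine ⟨hA, hB, hC, hD, hE, ?_⟩
  intro W hW
  have hW1 : star W * W = t μ * star (t μ) := by
    rw [hW, star_mul, KGraph.tck_q_star]
    calc (t μ * star (t μ)) * star V * (V * (t μ * star (t μ)))
        = (t μ * star (t μ)) * (star V * V) * (t μ * star (t μ)) := by simp only [mul_assoc]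
      _ = (t μ * star (t μ)) * (t ν * star (t ν)) * (t μ * star (t μ)) := by rw [hB]
      _ = (t μ * star (t μ)) * (t μ * star (t μ)) := by rw [hμν]
      _ = t μ * star (t μ) := hμμ
  have hWW : W * star W = V * (t μ * star (t μ)) * star V := by
    rw [hW, star_mul, KGraph.tck_q_star, ← mul_assoc, mul_assoc V, hμμ]
  have hconj := star_right_conjugate_le_conjugate hE V
  have hVν : V * (t ν * star (t ν)) * star V = t μ * star (t μ) := by
    rw [← hB]
    calc V * (star V * V) * star V = (V * star V) * (V * star V) := by simp only [mul_assoc]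
      _ = (t μ * star (t μ)) * (t μ * star (t μ)) := by rw [hA]
      _ = t μ * star (t μ) := hμμ
  have hrearr : V * (t (G.comp ν τ) * star (t (G.comp ν τ))) * star V
      = (V * t (G.comp ν τ)) * star (V * t (G.comp ν τ)) := by
    rw [star_mul]
    simp only [mul_assoc]
  have hVντ_nonneg : 0 ≤ V * (t (G.comp ν τ) * star (t (G.comp ν τ))) * star V := by
    rw [hrearr]
    exact mul_star_self_nonneg _
  have hexp : V * (t ν * star (t ν) - t (G.comp ν τ) * star (t (G.comp ν τ))) * star V
      = t μ * star (t μ) - V * (t (G.comp ν τ) * star (t (G.comp ν τ))) * star V := by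
    rw [mul_sub, sub_mul, hVν]
  have hW2 : W * star W ≤ t μ * star (t μ) := by
    calc W * star W = V * (t μ * star (t μ)) * star V := hWW
      _ ≤ V * (t ν * star (t ν) - t (G.comp ν τ) * star (t (G.comp ν τ))) * star V := hconj
      _ = t μ * star (t μ) - V * (t (G.comp ν τ) * star (t (G.comp ν τ))) * star V := hexp
      _ ≤ t μ * star (t μ) := sub_le_self _ hVντ_nonneg
  refine ⟨hW1, hW2, ?_⟩
  intro heq
  have h1 : t μ * star (t μ)
      ≤ t μ * star (t μ) - V * (t (G.comp ν τ) * star (t (G.comp ν τ))) * star V := by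
    calc t μ * star (t μ) = W * star W := heq.symm
      _ = V * (t μ * star (t μ)) * star V := hWW
      _ ≤ V * (t ν * star (t ν) - t (G.comp ν τ) * star (t (G.comp ν τ))) * star V := hconj
      _ = _ := hexp
  rw [le_sub_iff_add_le, add_le_iff_nonpos_right] at h1
  have h3 : V * (t (G.comp ν τ) * star (t (G.comp ν τ))) * star V = 0 :=
    le_antisymm h1 hVντ_nonneg
  have h4 : (V * t (G.comp ν τ)) * star (V * t (G.comp ν τ)) = 0 := by
    rw [← hrearr, h3]
  have h5 : V * t (G.comp ν τ) = 0 := by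
    have hn : ‖V * t (G.comp ν τ)‖ * ‖V * t (G.comp ν τ)‖ = 0 := by
      rw [← CStarRing.norm_self_mul_star, h4, norm_zero]
    exact norm_eq_zero.mp (mul_self_eq_zero.mp hn)
  have hq : (t ν * star (t ν)) * t (G.comp ν τ) = t (G.comp ν τ) := by
    calc (t ν * star (t ν)) * t (G.comp ν τ)
        = (t ν * star (t ν)) * ((t (G.comp ν τ) * star (t (G.comp ν τ))) * t (G.comp ν τ)) := by
          rw [KGraph.tck_q_mul_t hT]
      _ = ((t ν * star (t ν)) * (t (G.comp ν τ) * star (t (G.comp ν τ)))) * t (G.comp ν τ) := by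
          simp only [mul_assoc]
      _ = (t (G.comp ν τ) * star (t (G.comp ν τ))) * t (G.comp ν τ) := by rw [hν_ντ]
      _ = t (G.comp ν τ) := KGraph.tck_q_mul_t hT _
  have h6 : t (G.comp ν τ) = star V * (V * t (G.comp ν τ)) := by
    rw [← mul_assoc, hB, hq]
  rw [h5, mul_zero] at h6
  exact hτ0 h6
end

section
/- Let Λ be a finitely aligned k-graph, let Ε ⊆ FE(Λ) be satiated, and let H ⊆ Λ^0 be hereditary and Ε-saturated. Then Ε_H := {E \ EH : E ∈ Ε, r(E) ∉ H} is a subset of FE(Λ \ ΛH): for every E ∈ Ε with r(E) ∉ H, the set E \ EH is nonempty, finite, disjoint from Λ^0, contained in r(E)(Λ \ ΛH), and exhaustive in Λ \ ΛH, i.e. for every λ ∈ r(E)Λ with s(λ) ∉ H there exists μ ∈ E \ EH such that MCE(μ,λ) ∩ (Λ \ ΛH) ≠ ∅. -/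
open scoped BigOperators

/-- for hereditary `Ε`-saturated `H`, each `E \\ EH` (for `E ∈ Ε` with
`r(E) ∉ H`) is a finite exhaustive set of the `k`-graph `Λ \\ ΛH`. -/
theorem stmt8 {k : ℕ} (G : KGraph k) (hFA : G.FinitelyAligned)
    (Ε : Set (Set G.Path)) (hΕ : G.Satiated Ε)
    (H : Set G.Path) (hHv : ∀ v ∈ H, G.IsVertex v)
    (hHher : ∀ l : G.Path, G.r l ∈ H → G.s l ∈ H)
    (hHsat : ∀ E ∈ Ε, ∀ v : G.Path, G.IsVertex v → (∀ μ ∈ E, G.r μ = v) →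
      (∀ μ ∈ E, G.s μ ∈ H) → v ∈ H) :
    ∀ E ∈ Ε, ∀ v : G.Path, G.IsVertex v → (∀ μ ∈ E, G.r μ = v) → v ∉ H →
      ({μ ∈ E | G.s μ ∉ H} : Set G.Path).Nonempty ∧
      ({μ ∈ E | G.s μ ∉ H} : Set G.Path).Finite ∧
      (∀ μ ∈ ({μ ∈ E | G.s μ ∉ H} : Set G.Path),
        ¬ G.IsVertex μ ∧ G.r μ = v ∧ G.s μ ∉ H) ∧
      G.ExhaustiveIn {l | G.s l ∉ H} v {μ ∈ E | G.s μ ∉ H} := by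
  intro E hE v hv hr hvH
  obtain ⟨hEfin, -, hEnv, -⟩ := hΕ.1 E hE
  have hne : ({μ ∈ E | G.s μ ∉ H} : Set G.Path).Nonempty := by
    by_contra h
    exact hvH (hHsat E hE v hv hr (fun μ hμ => by
      by_contra hs
      exact h ⟨μ, hμ, hs⟩))
  refine ⟨hne, hEfin.subset (fun μ hμ => hμ.1),
    fun μ hμ => ⟨hEnv μ hμ.1, hr μ hμ.1, hμ.2⟩, ?_⟩
  intro l hl hrl
  by_cases hcase : ∃ μ ∈ E, ∃ μ', G.s μ = G.r μ' ∧ G.comp μ μ' = l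
  · obtain ⟨μ, hμE, μ', hsr, hcomp⟩ := hcase
    have hsl : G.s l = G.s μ' := by rw [← hcomp, G.s_comp μ μ' hsr]
    have hsμ : G.s μ ∉ H := fun h => hl (hsl ▸ (hHher μ' (hsr ▸ h)))
    refine ⟨μ, ⟨hμE, hsμ⟩, l, ⟨?_, ⟨G.s l, ?_, G.comp_id l⟩, ⟨μ', hsr, hcomp⟩⟩, hl⟩
    · have hle : G.d μ ≤ G.d l := by
        rw [← hcomp, G.d_comp μ μ' hsr]; exact le_self_add
      exact (sup_eq_left.mpr hle).symm
    · exact (G.r_of_vertex _ (G.d_s l)).symm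
  · have hS2 := (hΕ.2 E hE v hv hr).2.1 l (Set.mem_univ l) hrl hcase
    by_cases hα : ∃ α ∈ G.ExtIn Set.univ l E, G.s α ∉ H
    · obtain ⟨α, ⟨hslr, ν, hνE, hmce, -⟩, hsα⟩ := hα
      have hslα : G.s (G.comp l α) = G.s α := G.s_comp l α hslr
      obtain ⟨hd, hex1, β, hsνβ, hβ⟩ := hmce
      have hsν : G.s ν ∉ H := by
        intro h
        apply hsα
        have hb := hHher β (hsνβ ▸ h)
        rw [← hslα, ← hβ, G.s_comp ν β hsνβ]
        exact hb
      exact ⟨ν, ⟨hνE, hsν⟩, G.comp l α, ⟨hd, hex1, β, hsνβ, hβ⟩, by simpa [Set.mem_setOf_eq, hslα] using hsα⟩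
    · exfalso
      push_neg at hα
      exact hl (hHsat _ hS2 (G.s l) (G.d_s l)
        (fun μ hμ => hμ.1.symm) (fun μ hμ => hα μ hμ))
end

section
/- Let Λ be a finitely aligned k-graph, let c be a T-valued 2-cocycle on Λ, let Ε ⊆ FE(Λ) be satiated, let t be a relative Cuntz–Krieger (Λ,c;Ε)-family in a C*-algebra, and let I be a closed two-sided ideal of C*(t). Then H_I := {v ∈ Λ^0 : t_v ∈ I} is hereditary and Ε-saturated. -/
open scoped BigOperators

private lemma kgraph_MCE_comm {k : ℕ} (G : KGraph k) (μ ν : G.Path) :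
    G.MCE μ ν = G.MCE ν μ := by
  ext l
  constructor <;> rintro ⟨h1, h2, h3⟩ <;> exact ⟨by rw [h1, sup_comm], h3, h2⟩

private lemma kgraph_key {A : Type*} [NonUnitalNormedRing A] [StarRing A]
    [NormedSpace ℂ A] [IsScalarTower ℂ A A] [SMulCommClass ℂ A A]
    {P : Type*} (tv : A) (q : P → A) (I : Submodule ℂ A)
    (htv : tv * tv = tv) (F : Finset P) :
    ∀ (hq : ∀ a ∈ F, q a ∈ I)
      (hl : ∀ a ∈ F, tv * q a = q a)
      (hr : ∀ a ∈ F, q a * tv = q a)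
      (habs : ∀ a ∈ F, ∀ y ∈ I, (tv - q a) * y ∈ I)
      (h : (F : Set P).Pairwise (Function.onFun Commute
        (fun a => ((tv - q a : A) : Unitization ℂ A)))),
    ∃ y ∈ I, ((tv : A) : Unitization ℂ A) *
      F.noncommProd (fun a => ((tv - q a : A) : Unitization ℂ A)) h
      = ((tv - y : A) : Unitization ℂ A) := by
  induction F using Finset.cons_induction with
  | empty =>
    intro _ _ _ _ _
    exact ⟨0, I.zero_mem, by rw [Finset.noncommProd_empty, mul_one, sub_zero]⟩
  | cons a s ha ih =>
    intro hq hl hr habs h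
    have hs := h.mono (fun x hx => by
      rw [Finset.coe_cons]; exact Set.mem_insert_of_mem _ hx)
    obtain ⟨y, hy, hkey⟩ := ih (fun b hb => hq b (Finset.mem_cons_of_mem hb))
      (fun b hb => hl b (Finset.mem_cons_of_mem hb))
      (fun b hb => hr b (Finset.mem_cons_of_mem hb))
      (fun b hb => habs b (Finset.mem_cons_of_mem hb)) hs
    have hamem : a ∈ Finset.cons a s ha := Finset.mem_cons_self a s
    have hfa : tv * (tv - q a) = tv - q a := by rw [mul_sub, htv, hl a hamem]
    have hfa' : (tv - q a) * tv = tv - q a := by rw [sub_mul, htv, hr a hamem]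
    have hcomm : ((tv : A) : Unitization ℂ A) * ((tv - q a : A) : Unitization ℂ A)
        = ((tv - q a : A) : Unitization ℂ A) * ((tv : A) : Unitization ℂ A) := by
      rw [← Unitization.inr_mul, ← Unitization.inr_mul, hfa, hfa']
    refine ⟨q a + (tv - q a) * y, I.add_mem (hq a hamem) (habs a hamem y hy), ?_⟩
    rw [Finset.noncommProd_cons, ← mul_assoc, hcomm, mul_assoc, hkey,
      ← Unitization.inr_mul]
    congr 1
    rw [mul_sub, hfa', sub_sub]

/-- `H_I = {v ∈ Λ⁰ : t_v ∈ I}` is hereditary and `Ε`-saturated. -/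
theorem stmt9 {k : ℕ} (G : KGraph k) (hFA : G.FinitelyAligned) (σ : G.Cocycle)
    {A : Type*} [NonUnitalNormedRing A] [StarRing A] [CStarRing A]
    [NormedSpace ℂ A] [IsScalarTower ℂ A A] [SMulCommClass ℂ A A]
    [StarModule ℂ A] [CompleteSpace A]
    (Ε : Set (Set G.Path)) (hΕ : G.Satiated Ε)
    (t : G.Path → A) (ht : G.IsRelCK σ Ε t)
    (I : Submodule ℂ A) (hIclosed : IsClosed (I : Set A))
    (hIsub : (I : Set A) ⊆ G.cstarOf t)
    (hIabs : ∀ x ∈ G.cstarOf t, ∀ y ∈ I, x * y ∈ I ∧ y * x ∈ I) :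
    ∀ HI : Set G.Path, HI = {w | G.IsVertex w ∧ t w ∈ I} →
      (∀ l : G.Path, G.r l ∈ HI → G.s l ∈ HI) ∧
      (∀ E ∈ Ε, ∀ v : G.Path, G.IsVertex v → (∀ μ ∈ E, G.r μ = v) →
        (∀ μ ∈ E, G.s μ ∈ HI) → v ∈ HI) := by
  intro HI hHI
  subst hHI
  obtain ⟨⟨hP, hOrth, hTCK2, hTCK3, hTCK4⟩, hCK⟩ := ht
  set S := (NonUnitalStarAlgebra.adjoin ℂ (Set.range t)).topologicalClosure with hSdef
  have hScoe : (S : Set A) = G.cstarOf t := rfl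
  have hmem : ∀ l, t l ∈ S := fun l =>
    (NonUnitalStarAlgebra.adjoin ℂ (Set.range t)).le_topologicalClosure
      (NonUnitalStarAlgebra.subset_adjoin ℂ _ (Set.mem_range_self l))
  have hCm : ∀ {x : A}, x ∈ S → x ∈ G.cstarOf t := fun hx => hScoe ▸ hx
  -- t_v acts as a left unit on paths with range v
  have hvl : ∀ (v l : G.Path), G.IsVertex v → G.r l = v → t v * t l = t l := by
    intro v l hv hrl
    subst hrl
    have h1 : G.s (G.r l) = G.r l := G.s_of_vertex _ (G.d_r l)
    have h2 := hTCK2 (G.r l) l (by rw [h1])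
    rw [σ.left_id, G.id_comp, one_smul] at h2
    exact h2
  constructor
  · -- hereditary
    intro l hl
    obtain ⟨-, hrI⟩ := hl
    have h2 : t (G.r l) * t l = t l := hvl (G.r l) l (G.d_r l) rfl
    have h3 : t (G.r l) * t l ∈ I := (hIabs (t l) (hCm (hmem l)) _ hrI).2
    have h4 : star (t l) * (t (G.r l) * t l) ∈ I :=
      (hIabs (star (t l)) (hCm (star_mem (hmem l))) _ h3).1
    rw [h2, hTCK3] at h4
    exact ⟨G.d_s l, h4⟩
  · -- saturated
    intro E hE v hv hrE hsE
    have hfin : E.Finite := (hΕ.1 E hE).1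
    set F := hfin.toFinset with hFdef
    have hFc : (F : Set G.Path) = E := Set.Finite.coe_toFinset _
    have hvq : t v * star (t v) = t v := by rw [(hP v hv).1, (hP v hv).2]
    have hql1 : ∀ l, G.r l = v → t v * (t l * star (t l)) = t l * star (t l) := by
      intro l hrl
      rw [← mul_assoc, hvl v l hv hrl]
    have hql2 : ∀ l, G.r l = v → (t l * star (t l)) * t v = t l * star (t l) := by
      intro l hrl
      have h1 : star (t l) * t v = star (t l) := by
        rw [← (hP v hv).1, ← star_mul, hvl v l hv hrl]
      rw [mul_assoc, h1]
    have hqq : ∀ μ ν : G.Path, (t μ * star (t μ)) * (t ν * star (t ν))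
        = (t ν * star (t ν)) * (t μ * star (t μ)) := by
      intro μ ν
      have h1 := hTCK4 μ ν (hFA μ ν).toFinset (Set.Finite.coe_toFinset _)
      have h2 := hTCK4 ν μ (hFA μ ν).toFinset
        (by rw [Set.Finite.coe_toFinset]; exact (kgraph_MCE_comm G ν μ).symm ▸
          (kgraph_MCE_comm G μ ν ▸ rfl))
      rw [h1, h2]
    have hqI : ∀ μ ∈ F, t μ * star (t μ) ∈ I := by
      intro μ hμ
      have hsμ : t (G.s μ) ∈ I := (hsE μ (hFc ▸ hμ)).2
      have h1 : t μ * t (G.s μ) = t μ := by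
        have h2 := hTCK2 μ (G.s μ) (G.r_of_vertex _ (G.d_s μ)).symm
        rw [σ.right_id, G.comp_id, one_smul] at h2
        exact h2
      have h3 : t μ * t (G.s μ) ∈ I := (hIabs (t μ) (hCm (hmem μ)) _ hsμ).1
      have h4 : (t μ * t (G.s μ)) * star (t μ) ∈ I :=
        (hIabs (star (t μ)) (hCm (star_mem (hmem μ))) _ h3).2
      rwa [h1] at h4
    have hrF : ∀ μ ∈ F, G.r μ = v := fun μ hμ => hrE μ (hFc ▸ hμ)
    have hcomm : (F : Set G.Path).Pairwise (Function.onFun Commute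
        (fun l => ((t v * star (t v) - t l * star (t l) : A) : Unitization ℂ A))) := by
      intro μ hμ ν hν _
      have hμr : G.r μ = v := hrE μ (hFc ▸ hμ)
      have hνr : G.r ν = v := hrE ν (hFc ▸ hν)
      show _ * _ = _ * _
      rw [← Unitization.inr_mul, ← Unitization.inr_mul]
      congr 1
      rw [hvq, sub_mul, sub_mul, mul_sub, mul_sub, mul_sub, mul_sub,
        (hP v hv).2, hql1 μ hμr, hql1 ν hνr, hql2 μ hμr, hql2 ν hνr, hqq μ ν]
      abel
    have hd := hCK F v (by rw [hFc]; exact hE) hv hrF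
    rw [KGraph.Delta, dif_pos hcomm] at hd
    obtain ⟨y, hy, hkey⟩ := kgraph_key (t v * star (t v)) (fun l => t l * star (t l)) I
      (by rw [hvq]; exact (hP v hv).2) F hqI
      (fun a haF => by rw [hvq]; exact hql1 a (hrF a haF))
      (fun a haF => by rw [hvq]; exact hql2 a (hrF a haF))
      (fun a haF y hy => (hIabs _ (hCm (S.sub_mem
        (S.mul_mem (hmem v) ((star_mem (hmem v) : star (t v) ∈ S)))
        (S.mul_mem (hmem a) ((star_mem (hmem a) : star (t a) ∈ S))))) y hy).1)
      hcomm
    rw [hkey, Unitization.snd_inr] at hd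
    rw [hvq, sub_eq_zero] at hd
    exact ⟨hv, hd ▸ hy⟩
end
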